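/- arXiv:2205.09492 — 8 statements merged into one kernel-verified Lean document; each statement's English description precedes it below -/
import Mathlib

section
/- The limit as n → ∞ of the product for k = 1 to 2n+1 of (1 + 2/k)^(k·(-1)^(k+1)) equals πe/2. -/
open Filter Real Topology Finset

noncomputable def catalanG : ℝ := ∑' n : ℕ, (-1 : ℝ) ^ n / (2 * n + 1) ^ 2

noncomputable def zeta3 : ℝ := ∑' n : ℕ, (1 : ℝ) / (n + 1) ^ 3

/-- Kurokawa double sine (Hölder's function). -/
noncomputable def S2 (z : ℝ) : ℝ :=
  Real.exp z * ∏' n : ℕ, (((1 - z / (n + 1)) / (1 + z / (n + 1))) ^ (n + 1) * Real.exp (2 * z))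

/-- Kurokawa triple sine. -/
noncomputable def S3 (x : ℝ) : ℝ :=
  Real.exp (x ^ 2 / 2) * ∏' n : ℕ, (Real.exp (x ^ 2) * (1 - x ^ 2 / (n + 1) ^ 2) ^ ((n + 1) ^ 2))

/-- Kurokawa triple cosine. -/
noncomputable def C3 (x : ℝ) : ℝ :=
  ∏' n : ℕ, (Real.exp (x ^ 2) * (1 - 4 * x ^ 2 / (2 * n + 1) ^ 2) ^ (((2 * (n : ℝ) + 1) ^ 2) / 4))

/-- Partial Borwein–Dykshoorn product up to `2 n + 1`. -/
noncomputable def Dn (x : ℝ) (n : ℕ) : ℝ :=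
  ∏ k ∈ Finset.Icc 1 (2 * n + 1), (1 + x / k) ^ ((k : ℤ) * (-1) ^ (k + 1))

/-- Partial Adamchik product up to `2 N`. -/
noncomputable def En (x : ℝ) (N : ℕ) : ℝ :=
  ∏ k ∈ Finset.Icc 1 (2 * N), (Real.exp (4 * x ^ 2) * (1 - 4 * x ^ 2 / k ^ 2) ^ (k ^ 2)) ^ ((-1 : ℤ) ^ (k + 1))


noncomputable def Wp (n : ℕ) : ℝ :=
  ∏ i ∈ Finset.range n, ((2*(i:ℝ)+2)/(2*i+1)) * ((2*(i:ℝ)+2)/(2*i+3))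

noncomputable def Qp (n : ℕ) : ℝ :=
  (2*(n:ℝ)+3)^(2*n+1) / ((2*(n:ℝ)+1) * (2*(n:ℝ)+2)^(2*n))

lemma key (n : ℕ) :
    (∏ k ∈ Finset.Icc 1 (2*n+1), ((1 + 2/(k:ℝ)) ^ ((k:ℤ)*(-1)^(k+1)))) = Wp n * Qp n := by
  induction n with
  | zero => simp [Wp, Qp]; norm_num
  | succ n ih =>
    have h1 : 2*(n+1)+1 = (2*n+2)+1 := by ring
    rw [h1, Finset.prod_Icc_succ_top (by omega), Finset.prod_Icc_succ_top (by omega), ih]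
    have he : ((((2*n+2):ℕ)):ℤ) * (-1)^((2*n+2)+1) = -((2*n+2 : ℕ) : ℤ) := by
      rw [pow_succ]
      have : ((-1:ℤ))^(2*n+2) = 1 := by
        rw [pow_succ, pow_succ]
        simp [pow_mul]
      rw [this]; ring
    have ho : ((((2*n+2)+1:ℕ)):ℤ) * (-1)^(((2*n+2)+1)+1) = ((2*n+3 : ℕ) : ℤ) := by
      have : ((-1:ℤ))^(((2*n+2)+1)+1) = 1 := by
        have : ((2*n+2)+1)+1 = 2*(n+2) := by ring
        rw [this, pow_mul]; simp
      rw [this]; push_cast; ring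
    rw [he, ho, zpow_neg, zpow_natCast, zpow_natCast]
    have hWp : Wp (n+1) = Wp n * (((2*(n:ℝ)+2)/(2*n+1)) * ((2*(n:ℝ)+2)/(2*n+3))) := by
      rw [Wp, Finset.prod_range_succ]; rfl
    rw [hWp]
    have hx1 : (2*(n:ℝ)+1) ≠ 0 := by positivity
    have hx2 : (2*(n:ℝ)+2) ≠ 0 := by positivity
    have hx3 : (2*(n:ℝ)+3) ≠ 0 := by positivity
    have hx4 : (2*(n:ℝ)+4) ≠ 0 := by positivity
    have hx5 : (2*(n:ℝ)+5) ≠ 0 := by positivity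
    have hb1 : (1 + 2/(((2*n+2 : ℕ)):ℝ)) = (2*(n:ℝ)+4)/(2*(n:ℝ)+2) := by
      push_cast; field_simp; ring
    have hb2 : (1 + 2/(((2*n+3 : ℕ)):ℝ)) = (2*(n:ℝ)+5)/(2*(n:ℝ)+3) := by
      push_cast; field_simp; ring
    rw [show ((2*n+2)+1 : ℕ) = 2*n+3 from rfl, hb1, hb2]
    rw [Qp, Qp]
    push_cast
    have hq2 : 2*((n:ℝ)+1)+2 = 2*(n:ℝ)+4 := by ring
    have hq3 : 2*((n:ℝ)+1)+3 = 2*(n:ℝ)+5 := by ring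
    have hq1 : 2*((n:ℝ)+1)+1 = 2*(n:ℝ)+3 := by ring
    rw [hq1, hq2, hq3]
    rw [div_pow, div_pow]
    field_simp
    ring

lemma Qp_tendsto : Tendsto Qp atTop (𝓝 (Real.exp 1)) := by
  have hfun : Qp = fun n : ℕ =>
      ((1 + 1/((2*n+2 : ℕ):ℝ))^(2*n+2)) * (((2*(n:ℝ)+2)/(2*n+1)) * ((2*(n:ℝ)+2)/(2*n+3))) := by
    funext n
    have hx1 : (2*(n:ℝ)+1) ≠ 0 := by positivity
    have hx2 : (2*(n:ℝ)+2) ≠ 0 := by positivity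
    have hx3 : (2*(n:ℝ)+3) ≠ 0 := by positivity
    have hb : (1 + 1/((2*n+2 : ℕ):ℝ)) = (2*(n:ℝ)+3)/(2*(n:ℝ)+2) := by
      push_cast; field_simp; ring
    rw [Qp, hb, div_pow, show (2*n+2 : ℕ) = (2*n)+2 from rfl]
    field_simp
    ring
  rw [hfun]
  have h1 : Tendsto (fun n : ℕ => (1 + 1/((2*n+2 : ℕ):ℝ))^(2*n+2)) atTop (𝓝 (Real.exp 1)) := by
    have := (Real.tendsto_one_add_div_pow_exp 1).comp
      (tendsto_atTop_atTop.2 (fun b => ⟨b, fun a ha => by omega⟩) :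
        Tendsto (fun n : ℕ => 2*n+2) atTop atTop)
    exact this
  have hatop : Tendsto (fun n : ℕ => (2*(n:ℝ)+1)) atTop atTop := by
    apply tendsto_atTop_add_const_right
    exact (tendsto_natCast_atTop_atTop).const_mul_atTop two_pos
  have hatop3 : Tendsto (fun n : ℕ => (2*(n:ℝ)+3)) atTop atTop := by
    apply tendsto_atTop_add_const_right
    exact (tendsto_natCast_atTop_atTop).const_mul_atTop two_pos
  have h2 : Tendsto (fun n : ℕ => (2*(n:ℝ)+2)/(2*n+1)) atTop (𝓝 1) := by
    have : (fun n : ℕ => (2*(n:ℝ)+2)/(2*n+1)) = fun n : ℕ => 1 + 1/(2*(n:ℝ)+1) := by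
      funext n
      have hx1 : (2*(n:ℝ)+1) ≠ 0 := by positivity
      field_simp
      ring
    rw [this]
    have := (tendsto_inv_atTop_zero.comp hatop).const_add (1:ℝ)
    simpa [one_div] using this
  have h3 : Tendsto (fun n : ℕ => (2*(n:ℝ)+2)/(2*n+3)) atTop (𝓝 1) := by
    have : (fun n : ℕ => (2*(n:ℝ)+2)/(2*n+3)) = fun n : ℕ => 1 - 1/(2*(n:ℝ)+3) := by
      funext n
      have hx1 : (2*(n:ℝ)+3) ≠ 0 := by positivity
      field_simp
      ring
    rw [this]
    have := Tendsto.const_sub (1:ℝ) (tendsto_inv_atTop_zero.comp hatop3)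
    simpa [one_div] using this
  have := h1.mul (h2.mul h3)
  simpa using this

theorem melzak_product :
    Tendsto (fun n : ℕ => ∏ k ∈ Finset.Icc 1 (2 * n + 1),
      ((1 + 2 / (k : ℝ)) ^ ((k : ℤ) * (-1) ^ (k + 1))))
      atTop (𝓝 (π * Real.exp 1 / 2)) := by
  have : (fun n : ℕ => ∏ k ∈ Finset.Icc 1 (2 * n + 1),
      ((1 + 2 / (k : ℝ)) ^ ((k : ℤ) * (-1) ^ (k + 1)))) = fun n => Wp n * Qp n := by
    funext n; exact key n
  rw [this]
  have hW : Tendsto Wp atTop (𝓝 (π/2)) := Real.tendsto_prod_pi_div_two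
  have := hW.mul Qp_tendsto
  convert this using 2
  ring
end

section
/- For real x with 0 < |x| < 1, D(x)/D(-x) = e^x · S₂(x/2)⁴ / S₂(x), where D is the Borwein–Dykshoorn function and S₂ is the Kurokawa double sine function. -/
open Filter Real Topology Finset

/-! ### Auxiliary machinery -/

/-- The factor in the double sine product. -/
noncomputable def BDg (z : ℝ) (n : ℕ) : ℝ :=
  ((1 - z / (n + 1)) / (1 + z / (n + 1))) ^ (n + 1) * Real.exp (2 * z)

/-- Paired factor in the Borwein–Dykshoorn product. -/
noncomputable def BDh (y : ℝ) (j : ℕ) : ℝ :=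
  (1 + y / (2 * (j:ℝ) + 3)) ^ (2 * j + 3) * ((1 + y / (2 * (j:ℝ) + 2)) ^ (2 * j + 2))⁻¹

lemma S2_eq (z : ℝ) : S2 z = Real.exp z * ∏' n : ℕ, BDg z n := rfl

lemma pos_aux {z k : ℝ} (hz : |z| < 1) (hk : 1 ≤ k) : 0 < 1 + z / k := by
  have h1 : |z / k| < 1 := by
    rw [abs_div, abs_of_pos (by linarith : (0:ℝ) < k)]
    exact lt_of_le_of_lt (div_le_self (abs_nonneg z) hk) hz
  have := abs_lt.1 h1
  linarith [this.1]

lemma neg_pos_aux {z k : ℝ} (hz : |z| < 1) (hk : 1 ≤ k) : 0 < 1 - z / k := by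
  have := pos_aux (z := -z) (k := k) (by rwa [abs_neg]) hk
  rw [neg_div] at this; linarith

lemma klog_bound {z : ℝ} (hz : |z| < 1) {k : ℕ} (hk : 1 ≤ k) :
    |(k : ℝ) * Real.log (1 + z / k) + z ^ 2 / (2 * k) - z| ≤ 1 / ((1 - |z|) * k ^ 2) := by
  have hk0 : (0:ℝ) < k := by exact_mod_cast hk
  have hk1 : (1:ℝ) ≤ k := by exact_mod_cast hk
  set t : ℝ := z / k with ht
  have habs : |t| ≤ |z| := by
    rw [ht, abs_div, abs_of_pos hk0]
    exact div_le_self (abs_nonneg z) hk1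
  have ht1 : |(-t)| < 1 := by rw [abs_neg]; exact lt_of_le_of_lt habs hz
  have key := Real.abs_log_sub_add_sum_range_le ht1 2
  have hsum : (∑ i ∈ range 2, (-t) ^ (i + 1) / (i + 1)) = -t + t ^ 2 / 2 := by
    simp [Finset.sum_range_succ]; ring
  rw [hsum, (by ring : 1 - -t = 1 + t)] at key
  have hmul : |(k : ℝ) * Real.log (1 + z / k) + z ^ 2 / (2 * k) - z|
      = (k:ℝ) * |(-t + t ^ 2 / 2) + Real.log (1 + t)| := by
    rw [← abs_of_pos hk0, ← abs_mul]
    congr 1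
    rw [abs_of_pos hk0, ht]
    field_simp
    ring
  rw [hmul]
  have h1 : (0:ℝ) < 1 - |z| := by linarith
  have h2 : 1 - |z| ≤ 1 - |(-t)| := by rw [abs_neg]; linarith
  have hz3 : |z| ^ 3 ≤ 1 := pow_le_one₀ (abs_nonneg z) (le_of_lt hz)
  calc (k:ℝ) * |(-t + t ^ 2 / 2) + Real.log (1 + t)|
      ≤ (k:ℝ) * (|(-t)| ^ (2+1) / (1 - |(-t)|)) := by
        exact mul_le_mul_of_nonneg_left key (le_of_lt hk0)
    _ = ((k:ℝ) * |(-t)| ^ 3) / (1 - |(-t)|) := by ring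
    _ ≤ (1 / k ^ 2) / (1 - |z|) := by
        apply div_le_div₀ (by positivity) ?_ h1 h2
        rw [abs_neg, ht, abs_div, abs_of_pos hk0, div_pow]
        rw [mul_div_assoc']
        rw [div_le_div_iff₀ (by positivity) (by positivity)]
        calc (k:ℝ) * |z| ^ 3 * (k:ℝ) ^ 2 = |z|^3 * (k:ℝ)^3 := by ring
          _ ≤ 1 * (k:ℝ) ^ 3 := mul_le_mul_of_nonneg_right hz3 (by positivity)
    _ = 1 / ((1 - |z|) * k ^ 2) := by
        rw [one_div, one_div, mul_comm, mul_inv, div_eq_mul_inv]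

lemma BDg_pos {z : ℝ} (hz : |z| < 1) (n : ℕ) : 0 < BDg z n := by
  have h1 : (1:ℝ) ≤ (n:ℝ) + 1 := by have := Nat.cast_nonneg (α:=ℝ) n; linarith
  have := pos_aux hz h1
  have := neg_pos_aux hz h1
  unfold BDg; positivity

lemma BDg_log_bound {z : ℝ} (hz : |z| < 1) (n : ℕ) :
    |Real.log (BDg z n)| ≤ 2 / ((1 - |z|) * (n + 1) ^ 2) := by
  have h1 : (1:ℝ) ≤ (n:ℝ) + 1 := by have := Nat.cast_nonneg (α:=ℝ) n; linarith
  have hp := pos_aux hz h1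
  have hq := neg_pos_aux hz h1
  have hcast : ((n:ℝ) + 1) = ((n + 1 : ℕ) : ℝ) := by push_cast; ring
  have hlog : Real.log (BDg z n)
      = ((n:ℝ)+1) * Real.log (1 + (-z) / ((n:ℝ)+1))
        - (((n:ℝ)+1) * Real.log (1 + z / ((n:ℝ)+1))) + 2 * z := by
    unfold BDg
    rw [Real.log_mul (by positivity) (Real.exp_ne_zero _), Real.log_exp,
      Real.log_pow, Real.log_div (ne_of_gt hq) (ne_of_gt hp)]
    rw [(by ring : 1 - z / ((n:ℝ)+1) = 1 + (-z) / ((n:ℝ)+1))]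
    push_cast
    ring
  have hb1 := klog_bound (z := -z) (k := n + 1) (by rwa [abs_neg]) (by omega)
  have hb2 := klog_bound (z := z) (k := n + 1) hz (by omega)
  rw [abs_neg] at hb1
  rw [← hcast] at hb1 hb2
  have hid : Real.log (BDg z n)
      = (((n:ℝ)+1) * Real.log (1 + (-z) / ((n:ℝ)+1)) + (-z)^2/(2*((n:ℝ)+1)) - (-z))
        - (((n:ℝ)+1) * Real.log (1 + z / ((n:ℝ)+1)) + z^2/(2*((n:ℝ)+1)) - z) := by
    rw [hlog]; ring
  rw [hid]
  calc _ ≤ |((n:ℝ)+1) * Real.log (1 + (-z) / ((n:ℝ)+1)) + (-z)^2/(2*((n:ℝ)+1)) - (-z)|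
        + |((n:ℝ)+1) * Real.log (1 + z / ((n:ℝ)+1)) + z^2/(2*((n:ℝ)+1)) - z| := abs_sub _ _
    _ ≤ 1 / ((1 - |z|) * ((n:ℝ)+1) ^ 2) + 1 / ((1 - |z|) * ((n:ℝ)+1) ^ 2) := add_le_add hb1 hb2
    _ = 2 / ((1 - |z|) * ((n:ℝ)+1) ^ 2) := by ring

lemma summable_sq_aux : Summable (fun n : ℕ => 1 / ((n:ℝ) + 1) ^ 2) := by
  have := (summable_nat_add_iff (f := fun n : ℕ => 1 / (n:ℝ) ^ 2) 1).2
    (summable_one_div_nat_pow.2 one_lt_two)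
  refine this.congr fun n => ?_
  push_cast; ring

lemma BDg_log_summable {z : ℝ} (hz : |z| < 1) :
    Summable (fun n => Real.log (BDg z n)) := by
  have h1 : (0:ℝ) < 1 - |z| := by linarith [abs_nonneg z]
  apply Summable.of_abs
  apply Summable.of_nonneg_of_le (fun n => abs_nonneg _) (fun n => BDg_log_bound hz n)
  have := (summable_sq_aux.mul_left (2 / (1 - |z|)))
  refine this.congr fun n => ?_
  field_simp

lemma BDh_pos {y : ℝ} (hy : |y| < 1) (j : ℕ) : 0 < BDh y j := by
  have h1 : (1:ℝ) ≤ 2 * (j:ℝ) + 3 := by have := Nat.cast_nonneg (α:=ℝ) j; linarith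
  have h2 : (1:ℝ) ≤ 2 * (j:ℝ) + 2 := by have := Nat.cast_nonneg (α:=ℝ) j; linarith
  have := pos_aux hy h1
  have := pos_aux hy h2
  unfold BDh; positivity

lemma BDh_log_bound {y : ℝ} (hy : |y| < 1) (j : ℕ) :
    |Real.log (BDh y j)| ≤ (2 / (1 - |y|) + 1) / ((j:ℝ) + 1) ^ 2 := by
  have hj0 : (0:ℝ) ≤ (j:ℝ) := Nat.cast_nonneg j
  have h1 : (1:ℝ) ≤ 2 * (j:ℝ) + 3 := by linarith
  have h2 : (1:ℝ) ≤ 2 * (j:ℝ) + 2 := by linarith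
  have hp := pos_aux hy h1
  have hq := pos_aux hy h2
  have h1m : (0:ℝ) < 1 - |y| := by linarith [abs_nonneg y]
  have hc3 : ((2 * j + 3 : ℕ) : ℝ) = 2 * (j:ℝ) + 3 := by push_cast; ring
  have hc2 : ((2 * j + 2 : ℕ) : ℝ) = 2 * (j:ℝ) + 2 := by push_cast; ring
  have hb1 := klog_bound (z := y) (k := 2 * j + 3) hy (by omega)
  have hb2 := klog_bound (z := y) (k := 2 * j + 2) hy (by omega)
  rw [hc3] at hb1
  rw [hc2] at hb2
  have hlog : Real.log (BDh y j)
      = ((2*(j:ℝ)+3) * Real.log (1 + y/(2*(j:ℝ)+3)) + y^2/(2*(2*(j:ℝ)+3)) - y)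
        - ((2*(j:ℝ)+2) * Real.log (1 + y/(2*(j:ℝ)+2)) + y^2/(2*(2*(j:ℝ)+2)) - y)
        + (y^2/(2*(2*(j:ℝ)+2)) - y^2/(2*(2*(j:ℝ)+3))) := by
    unfold BDh
    rw [Real.log_mul (by positivity) (by positivity), Real.log_inv, Real.log_pow, Real.log_pow]
    push_cast
    ring
  have hstep : |Real.log (BDh y j)| ≤ 1 / ((1-|y|) * (2*(j:ℝ)+3)^2)
      + 1 / ((1-|y|) * (2*(j:ℝ)+2)^2) + y^2 / (2*(2*(j:ℝ)+2)*(2*(j:ℝ)+3)) := by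
    rw [hlog]
    have habc := abs_add_le (((2*(j:ℝ)+3) * Real.log (1 + y/(2*(j:ℝ)+3)) + y^2/(2*(2*(j:ℝ)+3)) - y)
        - ((2*(j:ℝ)+2) * Real.log (1 + y/(2*(j:ℝ)+2)) + y^2/(2*(2*(j:ℝ)+2)) - y))
        (y^2/(2*(2*(j:ℝ)+2)) - y^2/(2*(2*(j:ℝ)+3)))
    have hyterm : |y^2/(2*(2*(j:ℝ)+2)) - y^2/(2*(2*(j:ℝ)+3))|
        = y^2 / (2*(2*(j:ℝ)+2)*(2*(j:ℝ)+3)) := by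
      rw [abs_of_nonneg]
      · field_simp; ring
      · rw [sub_nonneg]
        apply div_le_div_of_nonneg_left (by positivity) (by linarith) (by linarith)
    calc _ ≤ _ := habc
      _ ≤ (1 / ((1-|y|) * (2*(j:ℝ)+3)^2) + 1 / ((1-|y|) * (2*(j:ℝ)+2)^2))
          + y^2 / (2*(2*(j:ℝ)+2)*(2*(j:ℝ)+3)) := by
        rw [hyterm]
        exact add_le_add_left ((abs_sub _ _).trans (add_le_add hb1 hb2)) _
      _ = _ := by ring
  refine hstep.trans ?_
  have e1 : ((j:ℝ)+1)^2 ≤ (2*(j:ℝ)+3)^2 := by nlinarith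
  have e2 : ((j:ℝ)+1)^2 ≤ (2*(j:ℝ)+2)^2 := by nlinarith
  have e3 : ((j:ℝ)+1)^2 ≤ 2*(2*(j:ℝ)+2)*(2*(j:ℝ)+3) := by nlinarith
  have hy2 : y^2 ≤ 1 := by nlinarith [abs_nonneg y, sq_abs y]
  have t1 : 1 / ((1-|y|) * (2*(j:ℝ)+3)^2) ≤ 1 / ((1-|y|) * ((j:ℝ)+1)^2) := by
    apply one_div_le_one_div_of_le (by positivity)
    exact mul_le_mul_of_nonneg_left e1 (le_of_lt h1m)
  have t2 : 1 / ((1-|y|) * (2*(j:ℝ)+2)^2) ≤ 1 / ((1-|y|) * ((j:ℝ)+1)^2) := by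
    apply one_div_le_one_div_of_le (by positivity)
    exact mul_le_mul_of_nonneg_left e2 (le_of_lt h1m)
  have t3 : y^2 / (2*(2*(j:ℝ)+2)*(2*(j:ℝ)+3)) ≤ 1 / ((j:ℝ)+1)^2 := by
    apply div_le_div₀ one_pos.le hy2 (by positivity) e3
  calc 1 / ((1-|y|) * (2*(j:ℝ)+3)^2) + 1 / ((1-|y|) * (2*(j:ℝ)+2)^2)
        + y^2 / (2*(2*(j:ℝ)+2)*(2*(j:ℝ)+3))
      ≤ 1 / ((1-|y|) * ((j:ℝ)+1)^2) + 1 / ((1-|y|) * ((j:ℝ)+1)^2) + 1 / ((j:ℝ)+1)^2 :=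
        add_le_add (add_le_add t1 t2) t3
    _ = (2 / (1 - |y|) + 1) / ((j:ℝ) + 1) ^ 2 := by field_simp; ring

lemma BDh_log_summable {y : ℝ} (hy : |y| < 1) :
    Summable (fun j => Real.log (BDh y j)) := by
  apply Summable.of_abs
  apply Summable.of_nonneg_of_le (fun n => abs_nonneg _) (fun n => BDh_log_bound hy n)
  refine (summable_sq_aux.mul_left (2 / (1 - |y|) + 1)).congr fun n => ?_
  rw [← div_eq_mul_one_div]

lemma hasProd_of_log (f : ℕ → ℝ) (hpos : ∀ i, 0 < f i)
    (h : Summable fun i => Real.log (f i)) :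
    HasProd f (Real.exp (∑' i, Real.log (f i))) := by
  have H := h.hasSum
  have hc := (Real.continuous_exp.tendsto _).comp H
  refine hc.congr fun s => ?_
  rw [Function.comp_apply, Real.exp_sum]
  exact Finset.prod_congr rfl fun i _ => Real.exp_log (hpos i)

lemma Dn_zero (y : ℝ) : Dn y 0 = 1 + y := by
  unfold Dn
  norm_num

lemma Dn_succ (y : ℝ) (n : ℕ) :
    Dn y (n + 1) = Dn y n * ((1 + y / (2 * (n:ℝ) + 2)) ^ (2 * n + 2))⁻¹
      * (1 + y / (2 * (n:ℝ) + 3)) ^ (2 * n + 3) := by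
  unfold Dn
  have e1 : 2 * (n + 1) + 1 = (2 * n + 2) + 1 := by ring
  have e2 : 2 * n + 2 = (2 * n + 1) + 1 := by ring
  rw [e1, Finset.prod_Icc_succ_top (by omega), e2, Finset.prod_Icc_succ_top (by omega)]
  have hexp2 : (((2 * n + 1 + 1 : ℕ)) : ℤ) * (-1) ^ ((2 * n + 1 + 1) + 1) = -(2 * n + 2 : ℕ) := by
    rw [Odd.neg_one_pow ⟨n + 1, by ring⟩]
    push_cast; ring
  have hexp3 : (((2 * n + 2 + 1 : ℕ)) : ℤ) * (-1) ^ ((2 * n + 2 + 1) + 1) = ((2 * n + 3 : ℕ) : ℤ) := by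
    rw [Even.neg_one_pow ⟨n + 2, by ring⟩]
    push_cast; ring
  rw [hexp2, hexp3, zpow_neg, zpow_natCast, zpow_natCast]
  have c2 : ((2 * n + 1 + 1 : ℕ) : ℝ) = 2 * (n:ℝ) + 2 := by push_cast; ring
  have c3 : ((2 * n + 2 + 1 : ℕ) : ℝ) = 2 * (n:ℝ) + 3 := by push_cast; ring
  rw [c2, c3]

lemma Dn_h_rep (y : ℝ) (n : ℕ) : Dn y n = (1 + y) * ∏ j ∈ range n, BDh y j := by
  induction n with
  | zero => simp [Dn_zero]
  | succ n ih =>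
      rw [Dn_succ, prod_range_succ, ih]
      unfold BDh
      ring

lemma key_step {x : ℝ} (hx : |x| < 1) (n : ℕ) :
    ((1 + x / (2 * (n:ℝ) + 2)) ^ (2 * n + 2))⁻¹ * (1 + x / (2 * (n:ℝ) + 3)) ^ (2 * n + 3)
      * (BDg x (2 * n + 1) * BDg x (2 * n + 2))
    = ((1 + (-x) / (2 * (n:ℝ) + 2)) ^ (2 * n + 2))⁻¹ * (1 + (-x) / (2 * (n:ℝ) + 3)) ^ (2 * n + 3)
      * (BDg (x / 2) n) ^ 4 := by
  have hj0 : (0:ℝ) ≤ (n:ℝ) := Nat.cast_nonneg n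
  have hp : 0 < 1 + x / (2 * (n:ℝ) + 2) := pos_aux hx (by linarith)
  have hq : 0 < 1 - x / (2 * (n:ℝ) + 2) := neg_pos_aux hx (by linarith)
  have hr : 0 < 1 + x / (2 * (n:ℝ) + 3) := pos_aux hx (by linarith)
  have hs : 0 < 1 - x / (2 * (n:ℝ) + 3) := neg_pos_aux hx (by linarith)
  have c1 : ((2 * n + 1 : ℕ) : ℝ) + 1 = 2 * (n:ℝ) + 2 := by push_cast; ring
  have c2 : ((2 * n + 2 : ℕ) : ℝ) + 1 = 2 * (n:ℝ) + 3 := by push_cast; ring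
  have c3 : (x / 2) / ((n:ℝ) + 1) = x / (2 * (n:ℝ) + 2) := by
    rw [div_div]; ring_nf
  unfold BDg
  rw [c1, c2, c3]
  have hneg1 : 1 + (-x) / (2 * (n:ℝ) + 2) = 1 - x / (2 * (n:ℝ) + 2) := by ring
  have hneg2 : 1 + (-x) / (2 * (n:ℝ) + 3) = 1 - x / (2 * (n:ℝ) + 3) := by ring
  rw [hneg1, hneg2]
  have hexp : Real.exp (2 * (x / 2)) = Real.exp x := by rw [show 2 * (x/2) = x by ring]
  rw [hexp]
  set p := 1 + x / (2 * (n:ℝ) + 2)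
  set q := 1 - x / (2 * (n:ℝ) + 2)
  set r := 1 + x / (2 * (n:ℝ) + 3)
  set s := 1 - x / (2 * (n:ℝ) + 3)
  have hexp4 : Real.exp (2*x) * Real.exp (2*x) = (Real.exp x) ^ 4 := by
    rw [← Real.exp_add, ← Real.exp_nat_mul]
    congr 1
    push_cast
    ring
  rw [mul_pow, div_pow, div_pow, div_pow, div_pow, ← pow_mul, ← pow_mul]
  rw [show (2*n+1)+1 = 2*n+2 from by ring, show (2*n+2)+1 = 2*n+3 from by ring,
    show (n+1)*4 = 4*n+4 from by ring, ← hexp4]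
  have hq44 : q ^ (4*n+4) = q ^ (2*n+2) * q ^ (2*n+2) := by rw [← pow_add]; ring_nf
  have hp44 : p ^ (4*n+4) = p ^ (2*n+2) * p ^ (2*n+2) := by rw [← pow_add]; ring_nf
  rw [hq44, hp44]
  field_simp

lemma claimB {x : ℝ} (hx : |x| < 1) (n : ℕ) :
    Dn x n * (∏ m ∈ range (2 * n + 1), BDg x m)
      = Dn (-x) n * Real.exp (2 * x) * (∏ m ∈ range n, BDg (x / 2) m) ^ 4 := by
  induction n with
  | zero =>
      rw [Dn_zero, Dn_zero]
      norm_num [BDg]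
      have h1 := abs_lt.1 hx
      have hx1 : (1:ℝ) + x > 0 := by linarith [h1.1]
      field_simp
      ring
  | succ n ih =>
      have hL : (∏ m ∈ range (2 * (n+1) + 1), BDg x m)
          = (∏ m ∈ range (2 * n + 1), BDg x m) * BDg x (2 * n + 1) * BDg x (2 * n + 2) := by
        rw [show 2 * (n + 1) + 1 = (2 * n + 1) + 1 + 1 from by ring, prod_range_succ,
          prod_range_succ, show 2 * n + 1 + 1 = 2 * n + 2 from by omega]
      rw [Dn_succ, Dn_succ, hL, Finset.prod_range_succ (fun m => BDg (x / 2) m) n]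
      calc Dn x n * ((1 + x / (2 * (n:ℝ) + 2)) ^ (2 * n + 2))⁻¹
            * (1 + x / (2 * (n:ℝ) + 3)) ^ (2 * n + 3)
            * ((∏ m ∈ range (2 * n + 1), BDg x m) * BDg x (2 * n + 1) * BDg x (2 * n + 2))
          = (Dn x n * ∏ m ∈ range (2 * n + 1), BDg x m)
            * (((1 + x / (2 * (n:ℝ) + 2)) ^ (2 * n + 2))⁻¹
              * (1 + x / (2 * (n:ℝ) + 3)) ^ (2 * n + 3)
              * (BDg x (2 * n + 1) * BDg x (2 * n + 2))) := by ring
        _ = (Dn (-x) n * Real.exp (2 * x) * (∏ m ∈ range n, BDg (x / 2) m) ^ 4)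
            * (((1 + (-x) / (2 * (n:ℝ) + 2)) ^ (2 * n + 2))⁻¹
              * (1 + (-x) / (2 * (n:ℝ) + 3)) ^ (2 * n + 3)
              * (BDg (x / 2) n) ^ 4) := by rw [ih, key_step hx n]
        _ = Dn (-x) n * ((1 + -x / (2 * (n:ℝ) + 2)) ^ (2 * n + 2))⁻¹
            * (1 + -x / (2 * (n:ℝ) + 3)) ^ (2 * n + 3) * Real.exp (2 * x)
            * ((∏ m ∈ range n, BDg (x / 2) m) * BDg (x / 2) n) ^ 4 := by
              rw [mul_pow]; ring

theorem borwein_dykshoorn_ratio (x : ℝ) (hx0 : 0 < |x|) (hx1 : |x| < 1)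
    (Dx Dnegx : ℝ)
    (hD : Tendsto (Dn x) atTop (𝓝 Dx))
    (hDneg : Tendsto (Dn (-x)) atTop (𝓝 Dnegx)) :
    Dx / Dnegx = Real.exp x * (S2 (x / 2)) ^ 4 / S2 x := by
  have hx2 : |x / 2| < 1 := by
    rw [abs_div]
    have : |x| / |(2:ℝ)| ≤ |x| := by
      rw [abs_two]
      linarith [abs_nonneg x, div_le_self (abs_nonneg x) (by norm_num : (1:ℝ) ≤ 2)]
    linarith
  have hxneg : |(-x)| < 1 := by rwa [abs_neg]
  -- limits of the double-sine partial products
  have hprod1 := hasProd_of_log _ (BDg_pos hx2) (BDg_log_summable hx2)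
  have hprod2 := hasProd_of_log _ (BDg_pos hx1) (BDg_log_summable hx1)
  set E1 : ℝ := Real.exp (∑' i, Real.log (BDg (x / 2) i)) with hE1
  set E2 : ℝ := Real.exp (∑' i, Real.log (BDg x i)) with hE2
  have htprod1 : (∏' n, BDg (x / 2) n) = E1 := hprod1.tprod_eq
  have htprod2 : (∏' n, BDg x n) = E2 := hprod2.tprod_eq
  have htend1 : Tendsto (fun n => ∏ m ∈ range n, BDg (x / 2) m) atTop (𝓝 E1) :=
    hprod1.tendsto_prod_nat
  have htend2 : Tendsto (fun n => ∏ m ∈ range n, BDg x m) atTop (𝓝 E2) :=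
    hprod2.tendsto_prod_nat
  have htend2' : Tendsto (fun n => ∏ m ∈ range (2 * n + 1), BDg x m) atTop (𝓝 E2) :=
    htend2.comp (tendsto_atTop_atTop.2 fun b => ⟨b, fun a ha => by omega⟩)
  -- the two sides of the finite identity converge
  have hF : Tendsto (fun n => Dn x n * ∏ m ∈ range (2 * n + 1), BDg x m) atTop
      (𝓝 (Dx * E2)) := hD.mul htend2'
  have hG : Tendsto (fun n => Dn (-x) n * Real.exp (2 * x)
      * (∏ m ∈ range n, BDg (x / 2) m) ^ 4) atTop
      (𝓝 (Dnegx * Real.exp (2 * x) * E1 ^ 4)) :=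
    (hDneg.mul tendsto_const_nhds).mul (htend1.pow 4)
  have heq : Dx * E2 = Dnegx * Real.exp (2 * x) * E1 ^ 4 := by
    refine tendsto_nhds_unique ?_ hG
    exact hF.congr fun n => claimB hx1 n
  -- Dnegx is nonzero
  have hDnegval : Dnegx = (1 + -x) * Real.exp (∑' j, Real.log (BDh (-x) j)) := by
    have hprodh := hasProd_of_log _ (BDh_pos hxneg) (BDh_log_summable hxneg)
    have htendh := hprodh.tendsto_prod_nat
    have h2 : Tendsto (Dn (-x)) atTop
        (𝓝 ((1 + -x) * Real.exp (∑' j, Real.log (BDh (-x) j)))) := by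
      have := (tendsto_const_nhds (x := (1 + -x)) (f := atTop)).mul htendh
      refine this.congr fun n => ?_
      rw [← Dn_h_rep]
    exact tendsto_nhds_unique hDneg h2
  have hxlt := abs_lt.1 hx1
  have hDneg_ne : Dnegx ≠ 0 := by
    rw [hDnegval]
    have : (0:ℝ) < 1 + -x := by linarith [hxlt.2]
    positivity
  -- final computation
  rw [S2_eq, S2_eq, htprod1, htprod2]
  have hDx : Dx = Dnegx * Real.exp (2 * x) * E1 ^ 4 / E2 :=
    (eq_div_iff (Real.exp_ne_zero _)).2 heq
  have e4 : (Real.exp (x / 2) * E1) ^ 4 = Real.exp (2 * x) * E1 ^ 4 := by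
    rw [mul_pow, ← Real.exp_nat_mul]
    congr 2
    push_cast
    ring
  rw [hDx, e4]
  rw [hE2]
  field_simp
end

section
/- For real x with |x| < 1/2, E(x) = e^(2x²) · S₃(2x) / S₃(x)⁸, where E is the Adamchik function and S₃ is the Kurokawa triple sine function. -/
open Filter Real Topology Finset

/-- The `n`-th factor of the triple-sine product. -/
noncomputable def Tt (y : ℝ) (n : ℕ) : ℝ :=
  Real.exp (y ^ 2) * (1 - y ^ 2 / (n + 1) ^ 2) ^ ((n + 1) ^ 2)

lemma Tt_pos {y : ℝ} (hy : y ^ 2 < 1) (n : ℕ) : 0 < Tt y n := by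
  have hc : (1 : ℝ) ≤ ((n : ℝ) + 1) ^ 2 := by nlinarith [Nat.cast_nonneg (α := ℝ) n]
  have ht : y ^ 2 / ((n : ℝ) + 1) ^ 2 ≤ y ^ 2 := div_le_self (sq_nonneg y) hc
  have : (0 : ℝ) < 1 - y ^ 2 / ((n : ℝ) + 1) ^ 2 := by linarith
  exact mul_pos (Real.exp_pos _) (pow_pos this _)

lemma summable_log_Tt {y : ℝ} (hy : y ^ 2 < 1) :
    Summable fun n => Real.log (Tt y n) := by
  have hbound : ∀ n : ℕ, |Real.log (Tt y n)| ≤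
      (y ^ 4 / (1 - y ^ 2)) * (1 / ((n : ℝ) + 1) ^ 2) := by
    intro n
    set c : ℝ := ((n : ℝ) + 1) ^ 2 with hcdef
    have hc1 : (1 : ℝ) ≤ c := by
      simp only [hcdef]; nlinarith [Nat.cast_nonneg (α := ℝ) n]
    have hc0 : (0 : ℝ) < c := by linarith
    set t : ℝ := y ^ 2 / c with htdef
    have ht0 : 0 ≤ t := div_nonneg (sq_nonneg y) hc0.le
    have hty : t ≤ y ^ 2 := div_le_self (sq_nonneg y) hc1
    have h1t : 0 < 1 - t := by linarith
    have h1y : 0 < 1 - y ^ 2 := by linarith [sq_nonneg y]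
    have hct : c * t = y ^ 2 := by
      simp only [htdef]; field_simp
    have hlog : Real.log (Tt y n) = y ^ 2 + c * Real.log (1 - t) := by
      have hb : (0 : ℝ) < 1 - t := h1t
      have : Real.log (Tt y n) =
          Real.log (Real.exp (y ^ 2)) + Real.log ((1 - t) ^ ((n + 1) ^ 2)) := by
        rw [Tt]
        have heq : (1 : ℝ) - y ^ 2 / ((n : ℝ) + 1) ^ 2 = 1 - t := by rw [htdef, hcdef]
        rw [heq, Real.log_mul (Real.exp_ne_zero _) (pow_ne_zero _ hb.ne')]
      rw [this, Real.log_exp, Real.log_pow]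
      congr 1
      push_cast [hcdef]
      ring
    -- upper bound : log(1-t) ≤ -t
    have hup : Real.log (1 - t) ≤ -t := by
      have := Real.log_le_sub_one_of_pos h1t
      linarith
    -- lower bound : -t/(1-t) ≤ log(1-t)
    have hlow : -(t / (1 - t)) ≤ Real.log (1 - t) := by
      have h := Real.log_le_sub_one_of_pos (inv_pos.mpr h1t)
      rw [Real.log_inv] at h
      have : (1 - t)⁻¹ - 1 = t / (1 - t) := by field_simp; ring
      linarith
    have hub : Real.log (Tt y n) ≤ 0 := by
      have : c * Real.log (1 - t) ≤ c * (-t) :=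
        mul_le_mul_of_nonneg_left hup hc0.le
      rw [hlog]; nlinarith
    have hlb : -((y ^ 4 / (1 - y ^ 2)) * (1 / c)) ≤ Real.log (Tt y n) := by
      have h1 : c * (-(t / (1 - t))) ≤ c * Real.log (1 - t) :=
        mul_le_mul_of_nonneg_left hlow hc0.le
      have h2 : c * (t / (1 - t)) = y ^ 2 / (1 - t) := by
        rw [mul_div_assoc'] ; rw [hct]
      have h3 : y ^ 2 - y ^ 2 / (1 - t) = -(y ^ 2 * t / (1 - t)) := by
        field_simp; ring
      have h4 : y ^ 2 * t / (1 - t) ≤ y ^ 2 * t / (1 - y ^ 2) := by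
        apply div_le_div_of_nonneg_left (by positivity) h1y (by linarith)
      have h5 : y ^ 2 * t / (1 - y ^ 2) = (y ^ 4 / (1 - y ^ 2)) * (1 / c) := by
        rw [htdef]; field_simp
      rw [hlog]
      have : -(y ^ 2 / (1 - t)) ≤ c * Real.log (1 - t) := by
        calc -(y ^ 2 / (1 - t)) = c * (-(t / (1 - t))) := by rw [mul_neg, h2]
        _ ≤ _ := h1
      nlinarith
    rw [abs_le]
    constructor
    · linarith
    · have : 0 ≤ (y ^ 4 / (1 - y ^ 2)) * (1 / c) := by positivity
      linarith
  have hs : Summable fun n : ℕ => (y ^ 4 / (1 - y ^ 2)) * (1 / ((n : ℝ) + 1) ^ 2) := by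
    apply Summable.mul_left
    have h0 : Summable fun n : ℕ => 1 / ((n : ℝ)) ^ 2 :=
      Real.summable_one_div_nat_pow.mpr one_lt_two
    have := (summable_nat_add_iff 1).mpr h0
    apply this.congr
    intro n; push_cast; ring
  exact (hs.of_nonneg_of_le (fun n => abs_nonneg _) hbound).of_abs

lemma hasProd_Tt {y : ℝ} (hy : y ^ 2 < 1) :
    HasProd (Tt y) (Real.exp (∑' n, Real.log (Tt y n))) := by
  have h := (summable_log_Tt hy).hasSum.rexp
  have he : (rexp ∘ fun n => Real.log (Tt y n)) = Tt y := by
    funext n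
    simp [Function.comp, Real.exp_log (Tt_pos hy n)]
  rwa [he] at h

lemma tprod_Tt_eq {y : ℝ} (hy : y ^ 2 < 1) :
    ∏' n, Tt y n = Real.exp (∑' n, Real.log (Tt y n)) :=
  (hasProd_Tt hy).tprod_eq

lemma tprod_Tt_pos {y : ℝ} (hy : y ^ 2 < 1) : 0 < ∏' n, Tt y n := by
  rw [tprod_Tt_eq hy]; exact Real.exp_pos _

/-- The Adamchik factor. -/
noncomputable def Af (x : ℝ) (k : ℕ) : ℝ :=
  Real.exp (4 * x ^ 2) * (1 - 4 * x ^ 2 / (k : ℝ) ^ 2) ^ (k ^ 2)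

lemma Af_eq_Tt2 (x : ℝ) (n : ℕ) : Af x (n + 1) = Tt (2 * x) n := by
  rw [Af, Tt]
  have h1 : (2 * x) ^ 2 = 4 * x ^ 2 := by ring
  rw [h1]
  congr 2
  push_cast
  ring

lemma Af_even (x : ℝ) (n : ℕ) : Af x (2 * (n + 1)) = (Tt x n) ^ 4 := by
  rw [Af, Tt]
  have hc : ((n : ℝ) + 1) ^ 2 ≠ 0 := by positivity
  have hb : (1 : ℝ) - 4 * x ^ 2 / ((2 * (n + 1) : ℕ) : ℝ) ^ 2 = 1 - x ^ 2 / ((n : ℝ) + 1) ^ 2 := by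
    push_cast; field_simp; ring
  rw [hb, show (2 * (n + 1)) ^ 2 = ((n + 1) ^ 2) * 4 by ring, pow_mul, mul_pow,
    ← Real.exp_nat_mul]
  norm_num

lemma En_eq (x : ℝ) (hx : x ^ 2 < 1 / 4) (N : ℕ) :
    En x N = (∏ i ∈ Finset.range (2 * N), Tt (2 * x) i) / (∏ i ∈ Finset.range N, Tt x i) ^ 8 := by
  have h4 : (2 * x) ^ 2 < 1 := by nlinarith
  have h1 : x ^ 2 < 1 := by nlinarith
  induction N with
  | zero => simp [En]
  | succ N ih =>
    have hAf_pos : ∀ k : ℕ, 1 ≤ k → 0 < Af x k := by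
      intro k hk
      rcases Nat.exists_eq_add_of_le hk with ⟨m, rfl⟩
      rw [add_comm, Af_eq_Tt2]
      exact Tt_pos h4 m
    have hB : (0 : ℝ) < ∏ i ∈ Finset.range N, Tt x i :=
      Finset.prod_pos fun i _ => Tt_pos h1 i
    have hstep : En x (N + 1) = En x N * Af x (2 * N + 1) * (Af x (2 * N + 2))⁻¹ := by
      rw [En, En]
      have h2 : 2 * (N + 1) = (2 * N + 1) + 1 := by ring
      rw [h2, Finset.prod_Icc_succ_top (by omega), Finset.prod_Icc_succ_top (by omega)]
      have hodd : ((-1 : ℤ)) ^ (2 * N + 1 + 1) = 1 := by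
        rw [(by ring : 2 * N + 1 + 1 = 2 * (N + 1)), pow_mul]; norm_num
      have heven : ((-1 : ℤ)) ^ (2 * N + 1 + 1 + 1) = -1 := by
        rw [(by ring : 2 * N + 1 + 1 + 1 = 2 * (N + 1) + 1), pow_succ, pow_mul]; norm_num
      rw [hodd, heven]
      have e1 : (Real.exp (4 * x ^ 2) * (1 - 4 * x ^ 2 / ((2 * N + 1 : ℕ) : ℝ) ^ 2) ^ ((2 * N + 1) ^ 2)) = Af x (2 * N + 1) := rfl
      have e2 : (Real.exp (4 * x ^ 2) * (1 - 4 * x ^ 2 / ((2 * N + 1 + 1 : ℕ) : ℝ) ^ 2) ^ ((2 * N + 1 + 1) ^ 2)) = Af x (2 * N + 2) := by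
        rw [Af]
      rw [e1, e2, zpow_one, zpow_neg, zpow_one]
    rw [hstep, ih]
    have h2N : 2 * (N + 1) = (2 * N) + 1 + 1 := by ring
    rw [h2N, Finset.prod_range_succ, Finset.prod_range_succ, Finset.prod_range_succ]
    have hT1 : Tt (2 * x) (2 * N) = Af x (2 * N + 1) := (Af_eq_Tt2 x (2 * N)).symm
    have hT2 : Tt (2 * x) (2 * N + 1) = Af x (2 * N + 2) := by
      rw [← Af_eq_Tt2]
    have hT3 : (Tt x N) ^ 4 = Af x (2 * N + 2) := by
      rw [← Af_even, show 2 * (N + 1) = 2 * N + 2 from by omega]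
    rw [hT1, hT2]
    have hA1 : 0 < Af x (2 * N + 1) := hAf_pos _ (by omega)
    have hA2 : 0 < Af x (2 * N + 2) := hAf_pos _ (by omega)
    have hTN : 0 < Tt x N := Tt_pos h1 N
    have hpow : ((∏ i ∈ Finset.range N, Tt x i) * Tt x N) ^ 8 = (∏ i ∈ Finset.range N, Tt x i) ^ 8 * (Af x (2 * N + 2)) ^ 2 := by
      rw [mul_pow]
      congr 1
      rw [← hT3, ← pow_mul]
    rw [hpow]
    field_simp

theorem adamchik_E_eq_S3 (x : ℝ) (hx : |x| < 1 / 2) :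
    Tendsto (En x) atTop (𝓝 (Real.exp (2 * x ^ 2) * S3 (2 * x) / (S3 x) ^ 8)) := by
  have hx2 : x ^ 2 < 1 / 4 := by
    have := abs_nonneg x
    nlinarith [sq_abs x]
  have h1 : x ^ 2 < 1 := by nlinarith
  have h4 : (2 * x) ^ 2 < 1 := by nlinarith
  -- limits of the two partial products
  have hP2 : Tendsto (fun n => ∏ i ∈ Finset.range n, Tt (2 * x) i) atTop (𝓝 (∏' n, Tt (2 * x) n)) := by
    have := hasProd_Tt h4
    rw [← tprod_Tt_eq h4] at this
    exact this.tendsto_prod_nat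
  have hP2' : Tendsto (fun N => ∏ i ∈ Finset.range (2 * N), Tt (2 * x) i) atTop (𝓝 (∏' n, Tt (2 * x) n)) := by
    apply hP2.comp
    exact Filter.tendsto_atTop_atTop.mpr fun b => ⟨b, fun a ha => by omega⟩
  have hP1 : Tendsto (fun N => ∏ i ∈ Finset.range N, Tt x i) atTop (𝓝 (∏' n, Tt x n)) := by
    have := hasProd_Tt h1
    rw [← tprod_Tt_eq h1] at this
    exact this.tendsto_prod_nat
  have hP1pos := tprod_Tt_pos h1
  have hP8 : Tendsto (fun N => (∏ i ∈ Finset.range N, Tt x i) ^ 8) atTop (𝓝 ((∏' n, Tt x n) ^ 8)) :=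
    hP1.pow 8
  have hlim : Tendsto (En x) atTop
      (𝓝 ((∏' n, Tt (2 * x) n) / (∏' n, Tt x n) ^ 8)) := by
    have := hP2'.div hP8 (by positivity)
    apply this.congr'
    filter_upwards with N
    exact (En_eq x hx2 N).symm
  have hfin : Real.exp (2 * x ^ 2) * S3 (2 * x) / (S3 x) ^ 8 =
      (∏' n, Tt (2 * x) n) / (∏' n, Tt x n) ^ 8 := by
    have hS3 : ∀ y : ℝ, S3 y = Real.exp (y ^ 2 / 2) * ∏' n, Tt y n := fun y => rfl
    rw [hS3, hS3, show (2 * x) ^ 2 / 2 = 2 * x ^ 2 by ring, mul_pow]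
    have he8 : (Real.exp (x ^ 2 / 2)) ^ 8 = Real.exp (4 * x ^ 2) := by
      rw [← Real.exp_nat_mul]
      congr 1
      push_cast
      ring
    rw [he8, ← mul_assoc, ← Real.exp_add, show 2 * x ^ 2 + 2 * x ^ 2 = 4 * x ^ 2 by ring,
      mul_div_mul_left _ _ (Real.exp_ne_zero _)]
  rw [hfin]
  exact hlim
end

section
/- For real x with |x| < 1/2, S₃(2x) = S₃(x)⁴ · C₃(x)⁴, where S₃ is the Kurokawa triple sine and C₃ the Kurokawa triple cosine function. -/
open Filter Real Topology Finset

private lemma myHasProd.pow {f : ℕ → ℝ} {a : ℝ} (h : HasProd f a) (k : ℕ) :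
    HasProd (fun n => f n ^ k) (a ^ k) := by
  have h' : Filter.Tendsto (fun s : Finset ℕ => ∏ b ∈ s, f b) Filter.atTop (nhds a) := h
  have := h'.pow k
  exact (by simpa only [← Finset.prod_pow] using this :
    Filter.Tendsto (fun s : Finset ℕ => ∏ b ∈ s, f b ^ k) Filter.atTop (nhds (a ^ k)))

private lemma my_multipliable {f : ℕ → ℝ} (hf : ∀ n, 0 < f n)
    (h : Summable fun n => Real.log (f n)) : Multipliable f := by
  have H := h.hasSum.rexp
  have he : (Real.exp ∘ fun n => Real.log (f n)) = f := funext fun n => Real.exp_log (hf n)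
  rw [he] at H
  exact H.multipliable

private lemma my_log_bound {t : ℝ} (h0 : 0 ≤ t) (h1 : t < 1) :
    |t + Real.log (1 - t)| ≤ t ^ 2 / (1 - t) := by
  have := Real.abs_log_sub_add_sum_range_le (x := t) (by rwa [abs_of_nonneg h0]) 1
  simpa [abs_of_nonneg h0, Finset.sum_range_one, sq] using this

private lemma my_summable {c T : ℝ} (hc : 0 ≤ c) (hT1 : T < 1) {d : ℕ → ℝ}
    (hd : ∀ n : ℕ, ((n : ℝ) + 1) ^ 2 / 4 ≤ d n) (hT : ∀ n, c / d n ≤ T) :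
    Summable fun n => c + d n * Real.log (1 - c / d n) := by
  have hd0 : ∀ n, 0 < d n := fun n => lt_of_lt_of_le (by positivity) (hd n)
  have hT0 : 0 ≤ T := le_trans (div_nonneg hc (hd0 0).le) (hT 0)
  have h1T : (0:ℝ) < 1 - T := by linarith
  have hbase : Summable fun n : ℕ => c ^ 2 / ((1 - T) * (((n : ℝ) + 1) ^ 2 / 4)) := by
    have h1 : Summable fun n : ℕ => (1 : ℝ) / (n : ℝ) ^ 2 :=
      summable_one_div_nat_pow.mpr one_lt_two
    have h2 : Summable fun n : ℕ => (1 : ℝ) / ((n : ℝ) + 1) ^ 2 := by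
      have := (summable_nat_add_iff 1).mpr h1
      refine this.congr fun n => ?_
      push_cast; ring_nf
    refine ((h2.mul_left (4 * c ^ 2 / (1 - T))).congr fun n => ?_)
    field_simp
  apply Summable.of_abs
  refine Summable.of_nonneg_of_le (fun n => abs_nonneg _) (fun n => ?_) hbase
  have hdn : d n ≠ 0 := (hd0 n).ne'
  set t := c / d n with ht
  have ht0 : 0 ≤ t := div_nonneg hc (hd0 n).le
  have ht1 : t < 1 := lt_of_le_of_lt (hT n) hT1
  have h1t : (0:ℝ) < 1 - t := by linarith
  have htT : t ≤ T := hT n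
  have hdt : c + d n * Real.log (1 - t) = d n * (t + Real.log (1 - t)) := by
    rw [ht]; field_simp
  rw [hdt, abs_mul, abs_of_nonneg (hd0 n).le]
  calc d n * |t + Real.log (1 - t)| ≤ d n * (t ^ 2 / (1 - t)) :=
        mul_le_mul_of_nonneg_left (my_log_bound ht0 ht1) (hd0 n).le
    _ = c ^ 2 / (d n * (1 - t)) := by
        have hpos1 : (0:ℝ) < d n ^ 2 * (1 - c / d n) := mul_pos (by positivity) h1t
        have hpos2 : (0:ℝ) < d n * (1 - c / d n) := mul_pos (hd0 n) h1t
        rw [ht, div_pow, div_div, ← mul_div_assoc, div_eq_div_iff hpos1.ne' hpos2.ne']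
        ring
    _ ≤ c ^ 2 / ((1 - T) * (((n : ℝ) + 1) ^ 2 / 4)) := by
        apply div_le_div_of_nonneg_left (by positivity) (by positivity)
        calc (1 - T) * (((n : ℝ) + 1) ^ 2 / 4) ≤ (1 - t) * d n :=
              mul_le_mul (by linarith) (hd n) (by positivity) (by linarith)
          _ = d n * (1 - t) := mul_comm _ _

theorem S3_duplication (x : ℝ) (hx : |x| < 1 / 2) :
    S3 (2 * x) = (S3 x) ^ 4 * (C3 x) ^ 4 := by
  unfold S3 C3
  have hx2 : x ^ 2 < 1 / 4 := by nlinarith [sq_abs x, abs_nonneg x]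
  have hsq : ∀ m : ℕ, (1 : ℝ) ≤ ((m : ℝ) + 1) ^ 2 := fun m => by nlinarith [Nat.cast_nonneg (α := ℝ) m]
  have hodd : ∀ m : ℕ, (1 : ℝ) ≤ (2 * (m : ℝ) + 1) ^ 2 := fun m => by nlinarith [Nat.cast_nonneg (α := ℝ) m]
  set s : ℕ → ℝ := fun m => Real.exp (x ^ 2) * (1 - x ^ 2 / ((m : ℝ) + 1) ^ 2) ^ ((m + 1) ^ 2) with hs
  set cc : ℕ → ℝ := fun m =>
    Real.exp (x ^ 2) * (1 - 4 * x ^ 2 / (2 * (m : ℝ) + 1) ^ 2) ^ ((2 * (m : ℝ) + 1) ^ 2 / 4) with hcc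
  set G : ℕ → ℝ := fun n =>
    Real.exp ((2 * x) ^ 2) * (1 - (2 * x) ^ 2 / ((n : ℝ) + 1) ^ 2) ^ ((n + 1) ^ 2) with hG
  have hbs : ∀ m : ℕ, 0 < 1 - x ^ 2 / ((m : ℝ) + 1) ^ 2 := by
    intro m
    have h2 : x ^ 2 / ((m : ℝ) + 1) ^ 2 ≤ x ^ 2 := div_le_self (sq_nonneg x) (hsq m)
    linarith
  have hbc : ∀ m : ℕ, 0 < 1 - 4 * x ^ 2 / (2 * (m : ℝ) + 1) ^ 2 := by
    intro m
    have h2 : 4 * x ^ 2 / (2 * (m : ℝ) + 1) ^ 2 ≤ 4 * x ^ 2 := div_le_self (by positivity) (hodd m)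
    linarith
  have hspos : ∀ m, 0 < s m := fun m => mul_pos (Real.exp_pos _) (pow_pos (hbs m) _)
  have hcpos : ∀ m, 0 < cc m := fun m => mul_pos (Real.exp_pos _) (Real.rpow_pos_of_pos (hbc m) _)
  have hms : Multipliable s := by
    apply my_multipliable hspos
    refine (my_summable (c := x ^ 2) (T := x ^ 2) (sq_nonneg x) (by linarith)
      (d := fun m => ((m : ℝ) + 1) ^ 2) (fun m => by nlinarith [hsq m])
      (fun m => div_le_self (sq_nonneg x) (hsq m))).congr fun m => ?_
    show x ^ 2 + ((m : ℝ) + 1) ^ 2 * Real.log (1 - x ^ 2 / ((m : ℝ) + 1) ^ 2) = Real.log (s m)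
    rw [hs]
    rw [Real.log_mul (Real.exp_ne_zero _) (pow_ne_zero _ (hbs m).ne'), Real.log_exp,
      Real.log_pow]
    push_cast
    ring
  have hmc : Multipliable cc := by
    apply my_multipliable hcpos
    have heq : ∀ m : ℕ, x ^ 2 / ((2 * (m : ℝ) + 1) ^ 2 / 4) = 4 * x ^ 2 / (2 * (m : ℝ) + 1) ^ 2 := by
      intro m; rw [div_div_eq_mul_div]; ring
    refine (my_summable (c := x ^ 2) (T := 4 * x ^ 2) (sq_nonneg x) (by linarith)
      (d := fun m => (2 * (m : ℝ) + 1) ^ 2 / 4) (fun m => by nlinarith [Nat.cast_nonneg (α := ℝ) m])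
      (fun m => by rw [heq m]; exact div_le_self (by positivity) (hodd m))).congr fun m => ?_
    show x ^ 2 + (2 * (m : ℝ) + 1) ^ 2 / 4 * Real.log (1 - x ^ 2 / ((2 * (m : ℝ) + 1) ^ 2 / 4))
        = Real.log (cc m)
    rw [heq m, hcc]
    rw [Real.log_mul (Real.exp_ne_zero _) (Real.rpow_pos_of_pos (hbc m) _).ne', Real.log_exp,
      Real.log_rpow (hbc m)]
  have hGe : ∀ m : ℕ, G (2 * m) = cc m ^ 4 := by
    intro m
    have hb := (hbc m).le
    have h1 : cc m ^ 4 = Real.exp (4 * x ^ 2) *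
        ((1 - 4 * x ^ 2 / (2 * (m : ℝ) + 1) ^ 2) ^ ((2 * (m : ℝ) + 1) ^ 2 / 4)) ^ (4 : ℕ) := by
      rw [hcc, mul_pow]
      congr 1
      rw [← Real.exp_nat_mul]
      norm_num
    have h2 : ((1 - 4 * x ^ 2 / (2 * (m : ℝ) + 1) ^ 2) ^ ((2 * (m : ℝ) + 1) ^ 2 / 4)) ^ (4 : ℕ)
        = (1 - 4 * x ^ 2 / (2 * (m : ℝ) + 1) ^ 2) ^ ((2 * m + 1) ^ 2 : ℕ) := by
      rw [← Real.rpow_natCast ((1 - 4 * x ^ 2 / (2 * (m : ℝ) + 1) ^ 2) ^ ((2 * (m : ℝ) + 1) ^ 2 / 4)) 4,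
        ← Real.rpow_mul hb,
        ← Real.rpow_natCast (1 - 4 * x ^ 2 / (2 * (m : ℝ) + 1) ^ 2) ((2 * m + 1) ^ 2)]
      congr 1
      push_cast; ring
    rw [h1, h2, hG]
    show Real.exp ((2 * x) ^ 2) *
        (1 - (2 * x) ^ 2 / (((2 * m : ℕ) : ℝ) + 1) ^ 2) ^ ((2 * m + 1) ^ 2) = _
    rw [show ((2 * x : ℝ)) ^ 2 = 4 * x ^ 2 from by ring,
      show (((2 * m : ℕ) : ℝ) + 1) = 2 * (m : ℝ) + 1 from by push_cast; ring]
  have hGo : ∀ m : ℕ, G (2 * m + 1) = s m ^ 4 := by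
    intro m
    rw [hG, hs]
    show Real.exp ((2 * x) ^ 2) *
        (1 - (2 * x) ^ 2 / (((2 * m + 1 : ℕ) : ℝ) + 1) ^ 2) ^ ((2 * m + 1 + 1) ^ 2)
      = (Real.exp (x ^ 2) * (1 - x ^ 2 / ((m : ℝ) + 1) ^ 2) ^ ((m + 1) ^ 2)) ^ 4
    have e3 : (2 * x) ^ 2 / (((2 * m + 1 : ℕ) : ℝ) + 1) ^ 2 = x ^ 2 / ((m : ℝ) + 1) ^ 2 := by
      push_cast
      rw [div_eq_div_iff (by positivity) (by positivity)]
      ring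
    rw [e3, show ((2 * x : ℝ)) ^ 2 = 4 * x ^ 2 from by ring, mul_pow, ← pow_mul,
      ← Real.exp_nat_mul, show (2 * m + 1 + 1) ^ 2 = (m + 1) ^ 2 * 4 from by ring]
    norm_num
  have he : Multipliable fun k => G (2 * k) := by
    rw [show (fun k => G (2 * k)) = (fun m => cc m ^ 4) from funext hGe]
    exact (myHasProd.pow hmc.hasProd 4).multipliable
  have ho : Multipliable fun k => G (2 * k + 1) := by
    rw [show (fun k => G (2 * k + 1)) = (fun m => s m ^ 4) from funext hGo]
    exact (myHasProd.pow hms.hasProd 4).multipliable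
  have hsplit := tprod_even_mul_odd he ho
  have hpe : (∏' k, G (2 * k)) = (∏' m, cc m) ^ 4 := by
    rw [show (fun k => G (2 * k)) = (fun m => cc m ^ 4) from funext hGe]
    exact (myHasProd.pow hmc.hasProd 4).tprod_eq
  have hpo : (∏' k, G (2 * k + 1)) = (∏' m, s m) ^ 4 := by
    rw [show (fun k => G (2 * k + 1)) = (fun m => s m ^ 4) from funext hGo]
    exact (myHasProd.pow hms.hasProd 4).tprod_eq
  rw [← hsplit, hpe, hpo]
  have hexp : Real.exp ((2 * x) ^ 2 / 2) = Real.exp (x ^ 2 / 2) ^ 4 := by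
    rw [← Real.exp_nat_mul]
    congr 1
    push_cast
    ring
  rw [hexp]
  ring
end

section
/- For real x with |x| < 1/2, E(x) = e^(2x²) · C₃(x)⁸ / S₃(2x). -/
open Filter Real Topology Finset

/-- log-term of the triple cosine product. -/
noncomputable def fA (x : ℝ) (m : ℕ) : ℝ :=
  x ^ 2 + (2 * (m : ℝ) + 1) ^ 2 / 4 * Real.log (1 - 4 * x ^ 2 / (2 * (m : ℝ) + 1) ^ 2)

/-- log-term of the triple sine product at `x`. -/
noncomputable def gA (x : ℝ) (m : ℕ) : ℝ :=
  x ^ 2 + ((m : ℝ) + 1) ^ 2 * Real.log (1 - x ^ 2 / ((m : ℝ) + 1) ^ 2)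

lemma aux_base_pos {y c : ℝ} (hy0 : 0 ≤ y) (hy : y < 1) (hc : 1 ≤ c) :
    0 < 1 - y / c ^ 2 := by
  have hc2 : (1 : ℝ) ≤ c ^ 2 := by nlinarith
  have := div_le_self hy0 hc2
  linarith

lemma aux_log_bound {y c : ℝ} (hy0 : 0 ≤ y) (hy : y < 1) (hc : 1 ≤ c) :
    |c ^ 2 * Real.log (1 - y / c ^ 2) + y| ≤ y ^ 2 / (1 - y) / c ^ 2 := by
  have hc2 : (1 : ℝ) ≤ c ^ 2 := by nlinarith
  have hc2' : (0 : ℝ) < c ^ 2 := by linarith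
  have hc0 : c ≠ 0 := by nlinarith
  set t := y / c ^ 2 with hts
  have ht0 : 0 ≤ t := div_nonneg hy0 (le_of_lt hc2')
  have hty : t ≤ y := div_le_self hy0 hc2
  have ht1 : |t| < 1 := by rw [abs_of_nonneg ht0]; linarith
  have key := Real.abs_log_sub_add_sum_range_le ht1 1
  rw [abs_of_nonneg ht0] at key
  norm_num [Finset.sum_range_one] at key
  have hct : c ^ 2 * t = y := by rw [hts, mul_comm]; exact div_mul_cancel₀ y (pow_ne_zero 2 hc0)
  have h1 : c ^ 2 * Real.log (1 - t) + y = c ^ 2 * (t + Real.log (1 - t)) := by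
    rw [mul_add, hct]; ring
  rw [h1, abs_mul, abs_of_pos hc2']
  calc c ^ 2 * |t + Real.log (1 - t)| ≤ c ^ 2 * (t ^ 2 / (1 - t)) :=
        mul_le_mul_of_nonneg_left key (le_of_lt hc2')
    _ ≤ c ^ 2 * (t ^ 2 / (1 - y)) := by
        apply mul_le_mul_of_nonneg_left _ (le_of_lt hc2')
        exact div_le_div_of_nonneg_left (sq_nonneg t) (by linarith) (by linarith)
    _ = y ^ 2 / (1 - y) / c ^ 2 := by
        rw [hts]
        have : (1 : ℝ) - y ≠ 0 := by linarith
        field_simp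

lemma aux_summable_inv_sq : Summable (fun m : ℕ => 1 / ((m : ℝ) + 1) ^ 2) := by
  have h : Summable (fun n : ℕ => 1 / (n : ℝ) ^ 2) :=
    summable_one_div_nat_pow.mpr one_lt_two
  have h2 := (summable_nat_add_iff 1).mpr h
  refine h2.congr fun n => ?_
  push_cast
  ring

lemma summable_fA {x : ℝ} (h4 : 4 * x ^ 2 < 1) : Summable (fA x) := by
  have h4' : (0:ℝ) < 1 - 4 * x ^ 2 := by linarith
  have hK : 0 ≤ 16 * x ^ 4 / (1 - 4 * x ^ 2) / 4 := by positivity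
  apply Summable.of_abs
  apply Summable.of_nonneg_of_le (fun m => abs_nonneg _) ?_
    (aux_summable_inv_sq.mul_left (16 * x ^ 4 / (1 - 4 * x ^ 2) / 4))
  · intro m
    set c : ℝ := 2 * (m : ℝ) + 1 with hc
    have hm0 : (0:ℝ) ≤ (m:ℝ) := Nat.cast_nonneg m
    have hc1 : (1 : ℝ) ≤ c := by rw [hc]; linarith
    have hm1 : (0 : ℝ) < ((m : ℝ) + 1) ^ 2 := by positivity
    have hcm : ((m : ℝ) + 1) ^ 2 ≤ c ^ 2 := by nlinarith [Nat.cast_nonneg (α := ℝ) m]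
    have key := aux_log_bound (y := 4 * x ^ 2) (by positivity) h4 hc1
    have h1 : fA x m = (c ^ 2 * Real.log (1 - 4 * x ^ 2 / c ^ 2) + 4 * x ^ 2) / 4 := by
      rw [fA, hc]; ring
    rw [h1, abs_div, abs_of_pos (by norm_num : (0:ℝ) < 4)]
    have h2 : (4 * x ^ 2) ^ 2 / (1 - 4 * x ^ 2) / c ^ 2 / 4
        ≤ 16 * x ^ 4 / (1 - 4 * x ^ 2) / 4 * (1 / ((m : ℝ) + 1) ^ 2) := by
      have h3 : (4 * x ^ 2) ^ 2 / (1 - 4 * x ^ 2) / c ^ 2 / 4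
          = (16 * x ^ 4 / (1 - 4 * x ^ 2) / 4) * (1 / c ^ 2) := by ring
      rw [h3]
      apply mul_le_mul_of_nonneg_left _ hK
      exact div_le_div_of_nonneg_left one_pos.le hm1 hcm
    calc |c ^ 2 * Real.log (1 - 4 * x ^ 2 / c ^ 2) + 4 * x ^ 2| / 4
        ≤ (4 * x ^ 2) ^ 2 / (1 - 4 * x ^ 2) / c ^ 2 / 4 := by
          gcongr
      _ ≤ _ := h2

lemma summable_gA {x : ℝ} (h4 : 4 * x ^ 2 < 1) : Summable (gA x) := by
  have hx2 : x ^ 2 < 1 := by nlinarith [sq_nonneg x]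
  have h4' : (0:ℝ) < 1 - x ^ 2 := by linarith
  apply Summable.of_abs
  apply Summable.of_nonneg_of_le (fun m => abs_nonneg _) ?_
    (aux_summable_inv_sq.mul_left (x ^ 4 / (1 - x ^ 2)))
  intro m
  set c : ℝ := (m : ℝ) + 1 with hc
  have hm0 : (0:ℝ) ≤ (m:ℝ) := Nat.cast_nonneg m
  have hc1 : (1 : ℝ) ≤ c := by rw [hc]; linarith
  have key := aux_log_bound (y := x ^ 2) (sq_nonneg x) hx2 hc1
  have h1 : gA x m = c ^ 2 * Real.log (1 - x ^ 2 / c ^ 2) + x ^ 2 := by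
    rw [gA, hc]; ring
  rw [h1]
  calc |c ^ 2 * Real.log (1 - x ^ 2 / c ^ 2) + x ^ 2|
      ≤ (x ^ 2) ^ 2 / (1 - x ^ 2) / c ^ 2 := key
    _ = x ^ 4 / (1 - x ^ 2) * (1 / c ^ 2) := by ring

lemma C3_eq {x : ℝ} (h4 : 4 * x ^ 2 < 1) :
    C3 x = Real.exp (∑' m, fA x m) := by
  have hf := summable_fA h4
  have hp : HasProd (fun m => Real.exp (fA x m)) (Real.exp (∑' m, fA x m)) :=
    hf.hasSum.rexp
  have heq : (fun m : ℕ => Real.exp (fA x m)) = fun n : ℕ =>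
      Real.exp (x ^ 2) * (1 - 4 * x ^ 2 / (2 * (n : ℝ) + 1) ^ 2) ^ ((2 * (n : ℝ) + 1) ^ 2 / 4) := by
    funext n
    have hm0 : (0:ℝ) ≤ (n:ℝ) := Nat.cast_nonneg n
    have hb : 0 < 1 - 4 * x ^ 2 / (2 * (n : ℝ) + 1) ^ 2 :=
      aux_base_pos (by positivity) h4 (by linarith)
    rw [fA, Real.exp_add]
    congr 1
    rw [Real.rpow_def_of_pos hb, mul_comm]
  rw [heq] at hp
  unfold C3
  exact hp.tprod_eq

lemma S3_two_eq {x : ℝ} (h4 : 4 * x ^ 2 < 1) :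
    S3 (2 * x) = Real.exp (2 * x ^ 2) *
      Real.exp (4 * (∑' m, fA x m) + 4 * (∑' m, gA x m)) := by
  have hf := summable_fA h4
  have hg := summable_gA h4
  set uA : ℕ → ℝ := fun n =>
    4 * x ^ 2 + ((n : ℝ) + 1) ^ 2 * Real.log (1 - 4 * x ^ 2 / ((n : ℝ) + 1) ^ 2) with huA
  have he : HasSum (fun m => uA (2 * m)) (4 * ∑' m, fA x m) := by
    have e1 : (fun m : ℕ => uA (2 * m)) = fun m => 4 * fA x m := by
      funext m
      simp only [huA, fA]
      push_cast
      ring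
    rw [e1]
    exact hf.hasSum.mul_left 4
  have ho : HasSum (fun m => uA (2 * m + 1)) (4 * ∑' m, gA x m) := by
    have e1 : (fun m : ℕ => uA (2 * m + 1)) = fun m => 4 * gA x m := by
      funext m
      simp only [huA, gA]
      have hm1 : ((m : ℝ) + 1) ≠ 0 := by positivity
      have harg : 4 * x ^ 2 / ((2 * (m:ℕ) + 1 : ℕ) + 1 : ℝ) ^ 2 = x ^ 2 / ((m : ℝ) + 1) ^ 2 := by
        push_cast
        field_simp
        ring
      push_cast at harg ⊢
      rw [harg]
      ring
    rw [e1]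
    exact hg.hasSum.mul_left 4
  have hu : HasSum uA (4 * (∑' m, fA x m) + 4 * (∑' m, gA x m)) := he.even_add_odd ho
  have hps : HasProd (fun n => Real.exp (uA n))
      (Real.exp (4 * (∑' m, fA x m) + 4 * (∑' m, gA x m))) := hu.rexp
  have heq : (fun n : ℕ => Real.exp (uA n)) = fun n : ℕ =>
      Real.exp (4 * x ^ 2) * (1 - 4 * x ^ 2 / ((n : ℝ) + 1) ^ 2) ^ ((n + 1) ^ 2 : ℕ) := by
    funext n
    have hm0 : (0:ℝ) ≤ (n:ℝ) := Nat.cast_nonneg n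
    have hb : 0 < 1 - 4 * x ^ 2 / ((n : ℝ) + 1) ^ 2 :=
      aux_base_pos (by positivity) h4 (by linarith)
    simp only [huA]
    rw [Real.exp_add]
    congr 1
    have hpow : (1 - 4 * x ^ 2 / ((n : ℝ) + 1) ^ 2) ^ ((n + 1) ^ 2 : ℕ)
        = Real.exp ((((n + 1) ^ 2 : ℕ) : ℝ) *
            Real.log (1 - 4 * x ^ 2 / ((n : ℝ) + 1) ^ 2)) := by
      rw [Real.exp_nat_mul, Real.exp_log hb]
    rw [hpow]
    congr 1
    push_cast
    ring
  rw [heq] at hps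
  unfold S3
  have h1 : (2 * x) ^ 2 / 2 = 2 * x ^ 2 := by ring
  rw [h1]
  congr 1
  rw [← hps.tprod_eq]
  apply tprod_congr
  intro n
  have h2 : (2 * x) ^ 2 = 4 * x ^ 2 := by ring
  rw [h2]

lemma En_eq_s8 {x : ℝ} (h4 : 4 * x ^ 2 < 1) (N : ℕ) :
    En x N = Real.exp (4 * ∑ m ∈ Finset.range N, (fA x m - gA x m)) := by
  induction N with
  | zero => simp [En]
  | succ N ih =>
    have hN0 : (0:ℝ) ≤ (N:ℝ) := Nat.cast_nonneg N
    unfold En at ih ⊢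
    have h1 : 2 * (N + 1) = (2 * N + 1) + 1 := by ring
    rw [h1, Finset.prod_Icc_succ_top (by omega), Finset.prod_Icc_succ_top (by omega), ih,
      Finset.sum_range_succ]
    have hevn : ((-1 : ℤ) ^ ((2 * N + 1) + 1)) = 1 := Even.neg_one_pow ⟨N + 1, by ring⟩
    have hodd : ((-1 : ℤ) ^ ((2 * N + 1 + 1) + 1)) = -1 := Odd.neg_one_pow ⟨N + 1, by ring⟩
    rw [hevn, hodd, zpow_one, zpow_neg_one]
    have hbo : 0 < 1 - 4 * x ^ 2 / (2 * (N:ℝ) + 1) ^ 2 :=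
      aux_base_pos (by positivity) h4 (by linarith)
    have hbe : 0 < 1 - 4 * x ^ 2 / (2 * (N:ℝ) + 2) ^ 2 :=
      aux_base_pos (by positivity) h4 (by linarith)
    have hA : Real.exp (4 * x ^ 2) *
        (1 - 4 * x ^ 2 / ((2 * N + 1 : ℕ) : ℝ) ^ 2) ^ ((2 * N + 1) ^ 2 : ℕ)
        = Real.exp (4 * fA x N) := by
      have hc : ((2 * N + 1 : ℕ) : ℝ) = 2 * (N:ℝ) + 1 := by push_cast; ring
      rw [hc]
      have hpow : (1 - 4 * x ^ 2 / (2 * (N:ℝ) + 1) ^ 2) ^ ((2 * N + 1) ^ 2 : ℕ)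
          = Real.exp ((((2 * N + 1) ^ 2 : ℕ) : ℝ) *
              Real.log (1 - 4 * x ^ 2 / (2 * (N:ℝ) + 1) ^ 2)) := by
        rw [Real.exp_nat_mul, Real.exp_log hbo]
      rw [hpow, ← Real.exp_add, fA]
      congr 1
      push_cast
      ring
    have hB : Real.exp (4 * x ^ 2) *
        (1 - 4 * x ^ 2 / ((2 * N + 1 + 1 : ℕ) : ℝ) ^ 2) ^ ((2 * N + 1 + 1) ^ 2 : ℕ)
        = Real.exp (4 * gA x N) := by
      have hc : ((2 * N + 1 + 1 : ℕ) : ℝ) = 2 * (N:ℝ) + 2 := by push_cast; ring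
      rw [hc]
      have hpow : (1 - 4 * x ^ 2 / (2 * (N:ℝ) + 2) ^ 2) ^ ((2 * N + 1 + 1) ^ 2 : ℕ)
          = Real.exp ((((2 * N + 1 + 1) ^ 2 : ℕ) : ℝ) *
              Real.log (1 - 4 * x ^ 2 / (2 * (N:ℝ) + 2) ^ 2)) := by
        rw [Real.exp_nat_mul, Real.exp_log hbe]
      have harg : 1 - 4 * x ^ 2 / (2 * (N:ℝ) + 2) ^ 2 = 1 - x ^ 2 / ((N:ℝ) + 1) ^ 2 := by
        have hm1 : ((N : ℝ) + 1) ≠ 0 := by positivity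
        field_simp
        ring
      rw [hpow, ← Real.exp_add, gA]
      congr 1
      rw [harg]
      push_cast
      ring
    rw [hA, hB, ← Real.exp_neg, ← Real.exp_add, ← Real.exp_add]
    congr 1
    ring

theorem adamchik_E_eq_C3 (x : ℝ) (hx : |x| < 1 / 2) :
    Tendsto (En x) atTop (𝓝 (Real.exp (2 * x ^ 2) * (C3 x) ^ 8 / S3 (2 * x))) := by
  have h4 : 4 * x ^ 2 < 1 := by nlinarith [sq_abs x, abs_nonneg x]
  have hf := summable_fA h4
  have hg := summable_gA h4
  set F := ∑' m, fA x m with hF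
  set G := ∑' m, gA x m with hG
  have hval : Real.exp (2 * x ^ 2) * (C3 x) ^ 8 / S3 (2 * x) = Real.exp (4 * (F - G)) := by
    rw [C3_eq h4, S3_two_eq h4, ← hF, ← hG, ← Real.exp_nat_mul, ← Real.exp_add,
      ← Real.exp_add, ← Real.exp_sub]
    congr 1
    push_cast
    ring
  rw [hval]
  have hFS : HasSum (fun m => fA x m - gA x m) (F - G) := hf.hasSum.sub hg.hasSum
  have h1 := hFS.tendsto_sum_nat
  have h2 : Tendsto (fun N => 4 * ∑ m ∈ Finset.range N, (fA x m - gA x m)) atTop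
      (𝓝 (4 * (F - G))) := h1.const_mul 4
  have h3 := (Real.continuous_exp.tendsto _).comp h2
  exact h3.congr fun N => (En_eq_s8 h4 N).symm
end

section
/- Holcombe's identity: π = e^(3/2) · ∏_{n≥2} ( e·(1 - 1/n²)^(n²) ). -/
open Filter Real Topology Finset

noncomputable def aseq (n : ℕ) : ℝ :=
  1 + ((n : ℝ) + 2) ^ 2 * Real.log (1 - 1 / ((n : ℝ) + 2) ^ 2)

lemma pos_aux_s11 (n : ℕ) : 0 < 1 - 1 / ((n : ℝ) + 2) ^ 2 := by
  have hn0 : (0:ℝ) ≤ n := Nat.cast_nonneg n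
  have h : (1:ℝ) < ((n:ℝ)+2)^2 := by nlinarith
  have := (div_lt_one (by positivity : (0:ℝ) < ((n:ℝ)+2)^2)).mpr h
  linarith

lemma exp_aseq (n : ℕ) : Real.exp (aseq n) =
    Real.exp 1 * (1 - 1 / ((n : ℝ) + 2) ^ 2) ^ ((n + 2) ^ 2) := by
  have hpos := pos_aux_s11 n
  have hk : ((n:ℝ)+2)^2 * Real.log (1 - 1/((n:ℝ)+2)^2)
      = Real.log ((1 - 1/((n:ℝ)+2)^2) ^ ((n+2)^2)) := by
    rw [Real.log_pow]; push_cast; ring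
  rw [aseq, Real.exp_add, hk, Real.exp_log (pow_pos hpos _)]

lemma aseq_abs_le (n : ℕ) : |aseq n| ≤ 2 / ((n:ℝ)+2)^2 := by
  have hn0 : (0:ℝ) ≤ n := Nat.cast_nonneg n
  set m : ℝ := (n:ℝ)+2 with hmdef
  have hm2 : (2:ℝ) ≤ m := by rw [hmdef]; linarith
  have hmsq : (4:ℝ) ≤ m^2 := by nlinarith
  have hm0 : (0:ℝ) < m := by linarith
  have hx0 : (0:ℝ) < 1/m^2 := by positivity
  have hx1 : 1/m^2 ≤ 1/4 := by
    rw [div_le_div_iff₀ (by positivity) (by norm_num)]; linarith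
  have hxabs : |1/m^2| < 1 := by rw [abs_of_pos hx0]; linarith
  have key := Real.abs_log_sub_add_sum_range_le hxabs 1
  simp only [Finset.sum_range_one, pow_one] at key
  rw [abs_of_pos hx0] at key
  norm_num [← one_div] at key
  have hm2ne : (m:ℝ)^2 ≠ 0 := by positivity
  have haseq : aseq n = m^2 * (1/m^2 + Real.log (1 - 1/m^2)) := by
    rw [aseq, ← hmdef, mul_add, mul_one_div_cancel hm2ne]
  clear_value m
  rw [haseq, abs_mul, abs_of_nonneg (by positivity : (0:ℝ) ≤ m^2)]
  have hne : m^2 - 1 ≠ 0 := by nlinarith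
  calc m^2 * |1/m^2 + Real.log (1 - 1/m^2)|
      ≤ m^2 * ((1/m^2)^2 / (1 - 1/m^2)) :=
        mul_le_mul_of_nonneg_left key (by positivity)
    _ = 1/(m^2-1) := by
        rw [show (1:ℝ) - 1/m^2 = (m^2-1)/m^2 by field_simp, eq_div_iff hne]
        field_simp
    _ ≤ 2/m^2 := by
        rw [div_le_div_iff₀ (by nlinarith) (by positivity)]; nlinarith

lemma summable_aseq : Summable aseq := by
  have h1 : Summable (fun n : ℕ => 1/((n:ℝ))^2) :=
    Real.summable_one_div_nat_pow.mpr one_lt_two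
  have h2 : Summable (fun n : ℕ => 1/((n:ℝ)+2)^2) := by
    have := (summable_nat_add_iff 2).mpr h1
    simpa [Nat.cast_add] using this
  apply Summable.of_abs
  apply Summable.of_nonneg_of_le (fun n => abs_nonneg _) aseq_abs_le
  simpa [div_eq_mul_inv, mul_comm] using h2.mul_left 2



lemma sum_aseq (N : ℕ) : ∑ n ∈ Finset.range N, aseq n =
    (N:ℝ) + 2 * Real.log (Nat.factorial N) - Real.log 2
      - (((N:ℝ)+1)^2 + 2*((N:ℝ)+1) - 1) * Real.log ((N:ℝ)+1)
      + ((N:ℝ)+1)^2 * Real.log ((N:ℝ)+2) := by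
  induction N with
  | zero => simp [Nat.factorial]
  | succ N ih =>
    rw [Finset.sum_range_succ, ih]
    have hN0 : (0:ℝ) ≤ N := Nat.cast_nonneg N
    have h1 : (1:ℝ) - 1/((N:ℝ)+2)^2 = (((N:ℝ)+1) * ((N:ℝ)+3)) / ((N:ℝ)+2)^2 := by
      field_simp; ring
    have h2 : (Nat.factorial (N+1) : ℝ) = ((N:ℝ)+1) * (Nat.factorial N : ℝ) := by
      rw [Nat.factorial_succ]; push_cast; ring
    have hfac : (0:ℝ) < (Nat.factorial N : ℝ) := by
      exact_mod_cast Nat.factorial_pos N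
    rw [aseq, h1, Real.log_div (by positivity) (by positivity),
        Real.log_mul (by positivity) (by positivity), Real.log_pow, h2,
        Real.log_mul (by positivity) (ne_of_gt hfac)]
    push_cast
    ring

lemma log_stirling (N : ℕ) :
    Real.log (Stirling.stirlingSeq (N+1)) =
      Real.log (Nat.factorial (N+1)) - (1/2) * Real.log (2*((N:ℝ)+1))
        - ((N:ℝ)+1) * Real.log ((N:ℝ)+1) + ((N:ℝ)+1) := by
  have hN0 : (0:ℝ) ≤ N := Nat.cast_nonneg N
  have hfac : (0:ℝ) < (Nat.factorial (N+1) : ℝ) := by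
    exact_mod_cast Nat.factorial_pos (N+1)
  have hc : ((N+1 : ℕ) : ℝ) = (N:ℝ)+1 := by push_cast; ring
  rw [Stirling.stirlingSeq, hc]
  have hsq : (0:ℝ) < Real.sqrt (2*((N:ℝ)+1)) := Real.sqrt_pos.mpr (by linarith)
  rw [Real.log_div (ne_of_gt hfac) (by positivity),
      Real.log_mul (ne_of_gt hsq) (by positivity),
      Real.log_sqrt (by linarith), Real.log_pow,
      Real.log_div (by positivity) (Real.exp_ne_zero 1), Real.log_exp]
  push_cast
  ring

lemma sum_aseq_eq (N : ℕ) : ∑ n ∈ Finset.range N, aseq n =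
    2 * Real.log (Stirling.stirlingSeq (N+1)) - ((N:ℝ)+2)
      + ((N:ℝ)+1)^2 * Real.log (1 + 1/((N:ℝ)+1)) := by
  have hN0 : (0:ℝ) ≤ N := Nat.cast_nonneg N
  have h1 : (1:ℝ) + 1/((N:ℝ)+1) = ((N:ℝ)+2)/((N:ℝ)+1) := by field_simp; ring
  have h2 : (Nat.factorial (N+1) : ℝ) = ((N:ℝ)+1) * (Nat.factorial N : ℝ) := by
    rw [Nat.factorial_succ]; push_cast; ring
  have hfac : (0:ℝ) < (Nat.factorial N : ℝ) := by exact_mod_cast Nat.factorial_pos N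
  rw [sum_aseq, log_stirling, h1, Real.log_div (by positivity) (by positivity), h2,
      Real.log_mul (by positivity) (ne_of_gt hfac),
      Real.log_mul (by norm_num) (by positivity)]
  ring


lemma tendsto_tail : Tendsto
    (fun N : ℕ => ((N:ℝ)+1)^2 * Real.log (1 + 1/((N:ℝ)+1)) - ((N:ℝ)+2))
    atTop (𝓝 (-(3/2))) := by
  rw [← tendsto_sub_nhds_zero_iff]
  have hbound : Tendsto (fun N : ℕ => 2/((N:ℝ)+1)) atTop (𝓝 0) :=
    tendsto_const_nhds.div_atTop
      (tendsto_atTop_add_const_right atTop 1 tendsto_natCast_atTop_atTop)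
  apply squeeze_zero_norm' _ hbound
  filter_upwards [eventually_ge_atTop 1] with N hN
  have hN1 : (1:ℝ) ≤ N := by exact_mod_cast hN
  set M : ℝ := (N:ℝ)+1 with hMdef
  have hM2 : (2:ℝ) ≤ M := by rw [hMdef]; linarith
  have hM0 : (0:ℝ) < M := by linarith
  clear_value M
  have hxabs : |(-1/M)| < 1 := by
    rw [abs_div, abs_neg, abs_one, abs_of_pos hM0, div_lt_one hM0]; linarith
  have key := Real.abs_log_sub_add_sum_range_le hxabs 2
  have hsum : ∑ i ∈ Finset.range 2, (-1/M) ^ (i+1) / (i+1)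
      = -1/M + (-1/M)^2/2 := by
    simp [Finset.sum_range_succ]
    norm_num
  have h1x : (1:ℝ) - (-1/M) = 1 + 1/M := by ring
  rw [hsum, h1x, abs_div, abs_neg, abs_one, abs_of_pos hM0] at key
  -- key : |(-1/M + (-1/M)^2/2) + log (1+1/M)| ≤ (1/M)^3 / (1 - 1/M)
  have hexpr : M^2 * Real.log (1 + 1/M) - (M+1) - (-(3/2))
      = M^2 * ((-1/M + (-1/M)^2/2) + Real.log (1+1/M)) := by
    have hMne : M ≠ 0 := ne_of_gt hM0
    field_simp
    ring
  have hgoal : ‖M^2 * Real.log (1 + 1/M) - (M+1) - (-(3/2))‖ ≤ 2/M := by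
    rw [Real.norm_eq_abs, hexpr, abs_mul, abs_of_nonneg (by positivity : (0:ℝ) ≤ M^2)]
    calc M^2 * |(-1/M + (-1/M)^2/2) + Real.log (1+1/M)|
        ≤ M^2 * ((1/M)^(2+1) / (1 - 1/M)) :=
          mul_le_mul_of_nonneg_left key (by positivity)
      _ = 1/(M-1) := by
          have hMne : M ≠ 0 := ne_of_gt hM0
          rw [show (1:ℝ) - 1/M = (M-1)/M by field_simp, div_div_eq_mul_div,
              show M ^ 2 * ((1 / M) ^ (2 + 1) * M / (M - 1))
                = (M^2*(1/M)^(2+1)*M) * (1/(M-1)) by ring,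
              show M^2*(1/M)^(2+1)*M = 1 by have h3 : M^3 * M⁻¹^3 = 1 := (by rw [← mul_pow, mul_inv_cancel₀ hMne, one_pow]); linear_combination h3, one_mul]
      _ ≤ 2/M := by
          rw [div_le_div_iff₀ (by linarith) hM0]; nlinarith
  rw [show ((N:ℝ)+2) = M+1 by rw [hMdef]; ring]
  exact hgoal

lemma tendsto_stirling2 : Tendsto
    (fun N : ℕ => 2 * Real.log (Stirling.stirlingSeq (N+1))) atTop (𝓝 (Real.log π)) := by
  have hs1 : Tendsto (fun N : ℕ => Stirling.stirlingSeq (N+1)) atTop (𝓝 (Real.sqrt π)) :=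
    Stirling.tendsto_stirlingSeq_sqrt_pi.comp (tendsto_add_atTop_nat 1)
  have hspos : 0 < Real.sqrt π := Real.sqrt_pos.mpr pi_pos
  have hlog : Tendsto (fun N : ℕ => Real.log (Stirling.stirlingSeq (N+1))) atTop
      (𝓝 (Real.log (Real.sqrt π))) :=
    ((Real.continuousAt_log (ne_of_gt hspos)).tendsto).comp hs1
  have h := hlog.const_mul 2
  rw [Real.log_sqrt pi_pos.le] at h
  have : 2 * (Real.log π / 2) = Real.log π := by ring
  rwa [this] at h

lemma tendsto_sums_aseq : Tendsto (fun N => ∑ n ∈ Finset.range N, aseq n) atTop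
    (𝓝 (Real.log π - 3/2)) := by
  have h := tendsto_stirling2.add tendsto_tail
  have hv : Real.log π + -(3/2) = Real.log π - 3/2 := by ring
  rw [hv] at h
  refine h.congr fun N => ?_
  rw [sum_aseq_eq]
  ring

lemma hasSum_aseq : HasSum aseq (Real.log π - 3/2) := by
  have h := summable_aseq.hasSum
  have h2 := h.tendsto_sum_nat
  rwa [tendsto_nhds_unique h2 tendsto_sums_aseq] at h

theorem holcombe_product :
    π = Real.exp (3 / 2) *
      ∏' n : ℕ, (Real.exp 1 * (1 - 1 / ((n : ℝ) + 2) ^ 2) ^ ((n + 2) ^ 2)) := by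
  have h : HasProd (Real.exp ∘ aseq) (Real.exp (Real.log π - 3/2)) := hasSum_aseq.rexp
  have heq : (Real.exp ∘ aseq) = fun n : ℕ =>
      Real.exp 1 * (1 - 1 / ((n : ℝ) + 2) ^ 2) ^ ((n + 2) ^ 2) := by
    funext n
    exact exp_aseq n
  rw [heq, Real.exp_sub, Real.exp_log pi_pos] at h
  rw [h.tprod_eq, mul_div_cancel₀ _ (Real.exp_ne_zero (3/2))]
end

section
/- S₂(1/2) = √2, where S₂(z) := e^z · ∏_{n≥1} ( ((1 - z/n)/(1 + z/n))^n · e^(2z) ). -/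
open Filter Real Topology Finset

-- key inequality: 2t ≤ log(1+t) - log(1-t) for 0 ≤ t < 1
lemma key_ineq {t : ℝ} (h0 : 0 ≤ t) (h1 : t < 1) :
    2 * t ≤ Real.log (1 + t) - Real.log (1 - t) := by
  have h1' : 0 < 1 - t := by linarith
  have h2' : 0 < 1 + t := by linarith
  -- h x = exp(-x)(1+x) - exp(x)(1-x) is monotone on [0,∞)
  set h : ℝ → ℝ := fun x => Real.exp (-x) * (1 + x) - Real.exp x * (1 - x) with hh
  have hderiv : ∀ x : ℝ, HasDerivAt h (x * (Real.exp x - Real.exp (-x))) x := by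
    intro x
    have d1 : HasDerivAt (fun x : ℝ => Real.exp (-x) * (1 + x))
        (Real.exp (-x) * -1 * (1 + x) + Real.exp (-x) * 1) x := by
      have := (((Real.hasDerivAt_exp (-x)).comp x (hasDerivAt_neg x)).mul
        ((hasDerivAt_id x).const_add 1))
      simpa [Function.comp_def, Pi.mul_def] using this
    have d2 : HasDerivAt (fun x : ℝ => Real.exp x * (1 - x))
        (Real.exp x * (1 - x) + Real.exp x * (0 - 1)) x := by
      have := (Real.hasDerivAt_exp x).mul (((hasDerivAt_id x).neg).const_add 1)
      simpa [Function.comp_def, Pi.mul_def, sub_eq_add_neg] using this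
    have := d1.sub d2
    refine this.congr_deriv ?_
    ring
  have hmono : MonotoneOn h (Set.Ici (0:ℝ)) := by
    apply monotoneOn_of_deriv_nonneg (convex_Ici 0)
    · exact (Continuous.continuousOn (by continuity))
    · intro x hx
      exact (hderiv x).differentiableAt.differentiableWithinAt
    · intro x hx
      rw [(hderiv x).deriv]
      simp only [Set.mem_Ioi, interior_Ici] at hx
      have : Real.exp (-x) ≤ Real.exp x := Real.exp_le_exp.2 (by linarith)
      nlinarith
  have key : 0 ≤ h t := by
    have h0' : h 0 = 0 := by simp [hh]
    have := hmono (Set.mem_Ici.2 le_rfl) (Set.mem_Ici.2 h0) h0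
    linarith [this]
  have hexp : Real.exp (2 * t) ≤ (1 + t) / (1 - t) := by
    rw [le_div_iff₀ h1']
    have : Real.exp t * (1 - t) ≤ Real.exp (-t) * (1 + t) := by
      simp only [hh] at key; linarith
    have hmul := mul_le_mul_of_nonneg_left this (Real.exp_pos t).le
    calc Real.exp (2 * t) * (1 - t) = Real.exp t * (Real.exp t * (1 - t)) := by
          rw [← mul_assoc, ← Real.exp_add]; ring_nf
      _ ≤ Real.exp t * (Real.exp (-t) * (1 + t)) := hmul
      _ = 1 + t := by rw [← mul_assoc, ← Real.exp_add]; simp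
  calc 2 * t = Real.log (Real.exp (2 * t)) := (Real.log_exp _).symm
    _ ≤ Real.log ((1 + t) / (1 - t)) :=
        Real.log_le_log (Real.exp_pos _) hexp
    _ = Real.log (1 + t) - Real.log (1 - t) := Real.log_div (by positivity) (by positivity)


noncomputable def aa (n : ℕ) : ℝ := ((2*n+1)/(2*n+3) : ℝ) ^ (n+1) * Real.exp 1

lemma aa_pos (n : ℕ) : 0 < aa n := by
  unfold aa; positivity

noncomputable def la (n : ℕ) : ℝ := Real.log (aa n)

lemma la_eq (n : ℕ) : la n = (n+1) * (Real.log (2*n+1) - Real.log (2*n+3)) + 1 := by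
  unfold la aa
  rw [Real.log_mul (by positivity) (by positivity), Real.log_pow, Real.log_div (by positivity) (by positivity), Real.log_exp]
  push_cast
  ring

lemma la_nonpos (n : ℕ) : la n ≤ 0 := by
  rw [la_eq]
  have h2 : (0:ℝ) < 2*n+2 := by positivity
  set t : ℝ := 1 / (2*n+2) with ht
  have h0t : 0 ≤ t := by positivity
  have ht1 : t < 1 := by
    rw [ht, div_lt_one h2]; linarith
  have key := key_ineq h0t ht1
  have e1 : (1:ℝ) + t = (2*n+3)/(2*n+2) := by rw [ht]; field_simp; ring
  have e2 : (1:ℝ) - t = (2*n+1)/(2*n+2) := by rw [ht]; field_simp; ring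
  rw [e1, e2, Real.log_div (by positivity) (by positivity),
    Real.log_div (by positivity) (by positivity)] at key
  have : 2 * t = 1/(n+1) := by rw [ht]; field_simp
  rw [this] at key
  have hn1 : (0:ℝ) < n + 1 := by positivity
  have key2 : 1 ≤ ((n:ℝ)+1) * (Real.log (2*n+3) - Real.log (2*n+1)) := by
    have := mul_le_mul_of_nonneg_left key hn1.le
    calc (1:ℝ) = ((n:ℝ)+1) * (1/(n+1)) := by field_simp
      _ ≤ _ := by linarith [this]
  nlinarith [key2]

noncomputable def sN (N : ℕ) : ℝ := ∑ n ∈ Finset.range N, la n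

lemma sN_eq (N : ℕ) : sN N = Real.log ((Nat.factorial (2*N)) : ℝ) - Real.log ((Nat.factorial N) : ℝ)
    - N * Real.log 2 - N * Real.log (2*N+1) + N := by
  induction N with
  | zero => simp [sN]
  | succ N ih =>
    rw [sN, Finset.sum_range_succ, ← sN, ih, la_eq]
    have e1 : Nat.factorial (2*(N+1)) = (2*N+2) * ((2*N+1) * Nat.factorial (2*N)) := by
      have : 2*(N+1) = (2*N+1) + 1 := by ring
      rw [this, Nat.factorial_succ, Nat.factorial_succ]
    have e2 : Nat.factorial (N+1) = (N+1) * Nat.factorial N := Nat.factorial_succ N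
    rw [e1, e2]
    push_cast
    rw [Real.log_mul (by positivity) (by positivity),
      Real.log_mul (by positivity) (by positivity),
      Real.log_mul (by positivity) (by positivity)]
    have e3 : (2*(N:ℝ)+2) = 2 * ((N:ℝ)+1) := by ring
    rw [e3, Real.log_mul (by norm_num) (by positivity)]
    have e4 : (2*((N:ℝ)+1)+1) = 2*(N:ℝ)+3 := by ring
    rw [e4]
    ring

lemma sN_stirling (N : ℕ) (hN : 1 ≤ N) :
    sN N = Real.log (Stirling.stirlingSeq (2*N)) - Real.log (Stirling.stirlingSeq N)
      + (1/2) * Real.log 2 + N * (Real.log (2*N) - Real.log (2*N+1)) := by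
  have hN0 : (0:ℝ) < N := by exact_mod_cast hN
  have g1 : Real.log ((Nat.factorial (2*N) : ℝ)) = Real.log (Stirling.stirlingSeq (2*N))
      + 1/2 * Real.log (2*(2*(N:ℝ))) + (2*(N:ℝ)) * Real.log ((2*(N:ℝ))/Real.exp 1) := by
    have := Stirling.log_stirlingSeq_formula (2*N)
    push_cast at this ⊢
    linarith
  have g2 : Real.log ((Nat.factorial N : ℝ)) = Real.log (Stirling.stirlingSeq N)
      + 1/2 * Real.log (2*(N:ℝ)) + (N:ℝ) * Real.log ((N:ℝ)/Real.exp 1) := by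
    have := Stirling.log_stirlingSeq_formula N
    push_cast at this ⊢
    linarith
  have f1 : Real.log ((2*(N:ℝ))/Real.exp 1) = Real.log (2*(N:ℝ)) - 1 := by
    rw [Real.log_div (by positivity) (Real.exp_ne_zero 1), Real.log_exp]
  have f2 : Real.log ((N:ℝ)/Real.exp 1) = Real.log (N:ℝ) - 1 := by
    rw [Real.log_div (by positivity) (Real.exp_ne_zero 1), Real.log_exp]
  have f3 : Real.log (2*(2*(N:ℝ))) = Real.log 2 + Real.log (2*(N:ℝ)) := by
    rw [Real.log_mul (by norm_num) (by positivity)]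
  have f4 : Real.log (2*(N:ℝ)) = Real.log 2 + Real.log (N:ℝ) := by
    rw [Real.log_mul (by norm_num) (by positivity)]
  rw [sN_eq]
  rw [g1, g2, f1, f2, f3, f4]
  ring

lemma sN_tendsto : Tendsto sN atTop (𝓝 (Real.log (Real.sqrt 2) - 1/2)) := by
  have hpi : (0:ℝ) < Real.sqrt π := Real.sqrt_pos.2 Real.pi_pos
  have hlog : Tendsto (fun n : ℕ => Real.log (Stirling.stirlingSeq n)) atTop
      (𝓝 (Real.log (Real.sqrt π))) :=
    ((Real.continuousAt_log hpi.ne').tendsto).comp Stirling.tendsto_stirlingSeq_sqrt_pi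
  have hdouble : Tendsto (fun N : ℕ => 2*N) atTop atTop :=
    Filter.tendsto_atTop_mono (fun n => by simpa using (by omega : n ≤ 2*n)) tendsto_id
  have hA : Tendsto (fun N : ℕ => Real.log (Stirling.stirlingSeq (2*N))
      - Real.log (Stirling.stirlingSeq N)) atTop (𝓝 0) := by
    have := (hlog.comp hdouble).sub hlog
    simpa using this
  have hB : Tendsto (fun N : ℕ => (N:ℝ) * (Real.log (2*N) - Real.log (2*N+1)))
      atTop (𝓝 (-(1/2))) := by
    have h1 : Tendsto (fun n : ℕ => (n:ℝ) * Real.log (1 + (1/2) / n)) atTop (𝓝 (1/2)) := by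
      have hc := (Real.continuousAt_log (Real.exp_pos (1/2:ℝ)).ne').tendsto.comp
        (Real.tendsto_one_add_div_pow_exp (1/2:ℝ))
      rw [Real.log_exp] at hc
      apply hc.congr
      intro n
      simp [Function.comp, Real.log_pow]
    have h2 := h1.neg
    apply h2.congr'
    filter_upwards [Filter.eventually_ge_atTop 1] with n hn
    have hn0 : (0:ℝ) < n := by exact_mod_cast hn
    have he : (1:ℝ) + (1/2) / n = (2*n+1)/(2*n) := by field_simp
    rw [he, Real.log_div (by positivity) (by positivity)]
    ring
  have hsum := (hA.add (tendsto_const_nhds (x := (1/2) * Real.log 2))).add hB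
  have hval : (0 + (1/2) * Real.log 2 + -(1/2)) = Real.log (Real.sqrt 2) - 1/2 := by
    rw [Real.log_sqrt (by norm_num)]
    ring
  rw [hval] at hsum
  apply hsum.congr'
  filter_upwards [Filter.eventually_ge_atTop 1] with N hN
  exact (sN_stirling N hN).symm

lemma la_summable : Summable la := by
  have hmono : Monotone (fun n => ∑ i ∈ Finset.range n, -la i) := by
    intro a b hab
    apply Finset.sum_le_sum_of_subset_of_nonneg (Finset.range_subset_range.2 hab)
    intro i _ _
    linarith [la_nonpos i]
  have htend : Tendsto (fun n => ∑ i ∈ Finset.range n, -la i) atTop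
      (𝓝 (-(Real.log (Real.sqrt 2) - 1/2))) := by
    have := sN_tendsto.neg
    apply this.congr
    intro n
    simp [sN, Finset.sum_neg_distrib]
  have hbound : ∀ n, ∑ i ∈ Finset.range n, -la i ≤ -(Real.log (Real.sqrt 2) - 1/2) :=
    fun n => hmono.ge_of_tendsto htend n
  have : Summable (fun n => -la n) :=
    summable_of_sum_range_le (fun n => neg_nonneg.2 (la_nonpos n)) hbound
  simpa using this.neg

lemma la_tsum : ∑' n, la n = Real.log (Real.sqrt 2) - 1/2 := by
  have h1 := la_summable.hasSum.tendsto_sum_nat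
  exact tendsto_nhds_unique h1 sN_tendsto

lemma aa_hasProd : HasProd aa (Real.exp (Real.log (Real.sqrt 2) - 1/2)) := by
  have := la_summable.hasSum.rexp
  rw [la_tsum] at this
  have hfun : Real.exp ∘ la = aa := funext fun n => Real.exp_log (aa_pos n)
  rwa [hfun] at this

theorem S2_half : S2 (1 / 2) = Real.sqrt 2 := by
  unfold S2
  have heq : (fun n : ℕ => ((1 - (1:ℝ)/2 / (n + 1)) / (1 + (1:ℝ)/2 / (n + 1))) ^ (n + 1)
      * Real.exp (2 * (1/2))) = aa := by
    funext n
    have hn : ((n:ℝ) + 1) ≠ 0 := by positivity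
    have h1 : (1 - (1:ℝ)/2 / (n + 1)) / (1 + (1:ℝ)/2 / (n + 1)) = (2*n+1)/(2*n+3) := by
      rw [div_eq_div_iff]
      · field_simp
        ring
      · positivity
      · positivity
    rw [h1]
    norm_num [aa]
  rw [heq, aa_hasProd.tprod_eq]
  rw [← Real.exp_add]
  have : (1:ℝ)/2 + (Real.log (Real.sqrt 2) - 1/2) = Real.log (Real.sqrt 2) := by ring
  rw [this, Real.exp_log (Real.sqrt_pos.2 (by norm_num))]
end

section
/- For real t with 0 < t < 1, S₂(t) = exp(∫₀ᵗ π s cot(π s) ds), where S₂ is the Kurokawa double sine. -/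
open Filter Real Topology Finset

lemma mden_pos {x : ℝ} (hx : |x| < 1) (n : ℕ) : 0 < ((n:ℝ)+1)^2 - x^2 := by
  have h1 : x^2 < 1 := by
    have := abs_lt.1 hx
    nlinarith [this.1, this.2]
  have h2 : (1:ℝ) ≤ ((n:ℝ)+1)^2 := by
    have : (1:ℝ) ≤ (n:ℝ)+1 := by
      have := Nat.cast_nonneg (α := ℝ) n; linarith
    nlinarith
  linarith

lemma summable_inv_sq : Summable (fun n : ℕ => 1/((n:ℝ)+1)^2) := by
  have := (summable_nat_add_iff (f := fun n : ℕ => 1/(n:ℝ)^2) 1).2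
    (summable_one_div_nat_pow.2 one_lt_two)
  simpa using this

lemma logdiff_bounds {x : ℝ} (hx0 : 0 < x) (hx1 : x < 1) :
    2*x ≤ log (1+x) - log (1-x) ∧ log (1+x) - log (1-x) ≤ 2*x + x^3/(1-x^2) := by
  have habs : |x| < 1 := abs_lt.2 ⟨by linarith, hx1⟩
  have H := Real.hasSum_log_sub_log_of_abs_lt_one habs
  set c : ℕ → ℝ := fun k => 2 * (1/(2*(k:ℝ)+1)) * x ^ (2*k+1) with hc
  have hc0 : c 0 = 2*x := by simp [hc]
  have H1 : HasSum (fun k => c (k+1)) ((log (1+x) - log (1-x)) - 2*x) := by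
    refine (hasSum_nat_add_iff 1).2 ?_
    simpa [hc0] using H
  have hx2 : x^2 < 1 := by nlinarith
  have hgeom : Summable (fun k : ℕ => x^3 * (x^2)^k) :=
    (summable_geometric_of_lt_one (by positivity) hx2).mul_left _
  have hle : ∀ k, c (k+1) ≤ x^3 * (x^2)^k := by
    intro k
    have h1 : 2 * (1/(2*((k:ℝ)+1)+1)) ≤ 1 := by
      rw [mul_one_div, div_le_one (by positivity)]
      nlinarith [Nat.cast_nonneg (α := ℝ) k]
    have hxp : (0:ℝ) ≤ x ^ (2*(k+1)+1) := by positivity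
    have : c (k+1) ≤ 1 * x ^ (2*(k+1)+1) := by
      rw [hc]
      have := mul_le_mul_of_nonneg_right h1 hxp
      simpa [mul_assoc] using this
    calc c (k+1) ≤ 1 * x ^ (2*(k+1)+1) := this
      _ = x^3 * (x^2)^k := by rw [one_mul, ← pow_mul]; ring
  have hnn : ∀ k, 0 ≤ c (k+1) := by
    intro k; rw [hc]; positivity
  constructor
  · have := H1.nonneg hnn  -- maybe wrong name
    linarith
  · have hsum_le : (log (1+x) - log (1-x)) - 2*x ≤ ∑' k, x^3 * (x^2)^k := by
      rw [← H1.tsum_eq]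
      exact Summable.tsum_le_tsum hle H1.summable hgeom
    have : ∑' k : ℕ, x^3 * (x^2)^k = x^3 * (1-x^2)⁻¹ := by
      rw [tsum_mul_left, tsum_geometric_of_lt_one (by positivity) hx2]
    rw [this] at hsum_le
    have : x^3 * (1-x^2)⁻¹ = x^3/(1-x^2) := by ring
    linarith [hsum_le, this ▸ hsum_le]


/-- the summand `m log((m+t)/(m-t)) - 2t`, `m = n+1` -/
noncomputable def Fsum (t : ℝ) (n : ℕ) : ℝ :=
  ((n:ℝ)+1) * (log (((n:ℝ)+1)+t) - log (((n:ℝ)+1)-t)) - 2*t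

lemma Fsum_bounds {t : ℝ} (ht0 : 0 < t) (ht1 : t < 1) (n : ℕ) :
    0 ≤ Fsum t n ∧ Fsum t n ≤ t^3/(1-t^2) * (1/((n:ℝ)+1)^2) := by
  set m : ℝ := (n:ℝ)+1 with hm
  have hm1 : (1:ℝ) ≤ m := by
    have := Nat.cast_nonneg (α := ℝ) n; rw [hm]; linarith
  have hm0 : 0 < m := by linarith
  set x : ℝ := t/m with hx
  have hx0 : 0 < x := by positivity
  have hx1 : x < 1 := by
    rw [hx, div_lt_one hm0]; linarith
  have hplus : m + t = m * (1+x) := by rw [hx]; field_simp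
  have hminus : m - t = m * (1-x) := by rw [hx]; field_simp
  have hlp : log (m+t) = log m + log (1+x) := by
    rw [hplus, Real.log_mul hm0.ne' (by linarith)]
  have hlm : log (m-t) = log m + log (1-x) := by
    rw [hminus, Real.log_mul hm0.ne' (by linarith)]
  have hFeq : Fsum t n = m * (log (1+x) - log (1-x)) - 2*t := by
    rw [Fsum, hlp, hlm]; ring
  clear_value x m
  obtain ⟨hlow, hhigh⟩ := logdiff_bounds hx0 hx1
  have hmx : m * x = t := by rw [hx]; field_simp
  constructor
  · rw [hFeq]
    nlinarith [mul_le_mul_of_nonneg_left hlow hm0.le]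
  · rw [hFeq]
    have h1 : m * (log (1+x) - log (1-x)) ≤ m * (2*x + x^3/(1-x^2)) :=
      mul_le_mul_of_nonneg_left hhigh hm0.le
    have hx2 : x^2 < 1 := by nlinarith
    have h2 : m * (2*x + x^3/(1-x^2)) = 2*t + m * x^3/(1-x^2) := by
      rw [mul_add]; rw [← hmx]; ring
    have h3 : m * x^3/(1-x^2) ≤ t^3/(1-t^2) * (1/m^2) := by
      have hmt2 : 0 < m^2 - t^2 := by nlinarith
      have ht2 : 0 < 1 - t^2 := by nlinarith
      have key : m * x^3 / (1-x^2) = t^3/(m^2 - t^2) := by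
        rw [hx]; field_simp
      have hr : t^3/(1-t^2) * (1/m^2) = t^3/((1-t^2)*m^2) := by
        rw [div_mul_div_comm, mul_one]
      rw [key, hr, div_le_div_iff₀ hmt2 (by positivity)]
      have hm2 : (1:ℝ) ≤ m^2 := by nlinarith [hm1]
      have : (1-t^2)*m^2 ≤ m^2 - t^2 := by nlinarith [hm2, ht2]
      have ht3 : (0:ℝ) ≤ t^3 := pow_nonneg ht0.le 3
      exact mul_le_mul_of_nonneg_left this ht3
    calc m * (log (1+x) - log (1-x)) - 2*t ≤ 2*t + m*x^3/(1-x^2) - 2*t := by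
          rw [← h2]; linarith
      _ = m * x^3/(1-x^2) := by ring
      _ ≤ t^3/(1-t^2) * (1/m^2) := h3


lemma summable_Fsum {t : ℝ} (ht0 : 0 < t) (ht1 : t < 1) : Summable (Fsum t) :=
  Summable.of_nonneg_of_le (fun n => (Fsum_bounds ht0 ht1 n).1)
    (fun n => (Fsum_bounds ht0 ht1 n).2) (summable_inv_sq.mul_left _)

lemma sq_den_ge {x : ℝ} (hx : |x| < 1) (n : ℕ) :
    (1-x^2) * (((n:ℝ)+1))^2 ≤ ((n:ℝ)+1)^2 - x^2 := by
  have h1 : x^2 ≤ 1 := by nlinarith [abs_lt.1 hx |>.1, abs_lt.1 hx |>.2]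
  have h2 : (1:ℝ) ≤ ((n:ℝ)+1)^2 := by
    have : (0:ℝ) ≤ (n:ℝ) := Nat.cast_nonneg n
    nlinarith
  nlinarith

lemma gn_le {x : ℝ} (hx : |x| < 1) (n : ℕ) :
    2*x^2/(((n:ℝ)+1)^2 - x^2) ≤ 2*x^2/(1-x^2) * (1/((n:ℝ)+1)^2) := by
  have hd := mden_pos hx n
  have h1 : x^2 < 1 := by nlinarith [abs_lt.1 hx |>.1, abs_lt.1 hx |>.2]
  have hrr : 2*x^2/(1-x^2) * (1/((n:ℝ)+1)^2) = 2*x^2/((1-x^2)*((n:ℝ)+1)^2) := by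
    rw [div_mul_div_comm, mul_one]
  rw [hrr]
  rcases eq_or_ne x 0 with h | h
  · simp [h]
  · have hpos : (0:ℝ) < (1-x^2)*((n:ℝ)+1)^2 := mul_pos (by nlinarith) (by positivity)
    rw [div_le_div_iff₀ hd hpos]
    exact mul_le_mul_of_nonneg_left (sq_den_ge hx n) (by positivity)
lemma summable_gn {x : ℝ} (hx : |x| < 1) :
    Summable (fun n : ℕ => 2*x^2/(((n:ℝ)+1)^2 - x^2)) :=
  Summable.of_nonneg_of_le (fun n => div_nonneg (by positivity) (mden_pos hx n).le)
    (fun n => gn_le hx n)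
    (summable_inv_sq.mul_left _)

lemma summable_L {x : ℝ} (hx : |x| < 1) :
    Summable (fun n : ℕ => Real.log (1 - x^2/((n:ℝ)+1)^2)) := by
  rw [← summable_neg_iff]
  have h1 : x^2 < 1 := by nlinarith [abs_lt.1 hx |>.1, abs_lt.1 hx |>.2]
  refine Summable.of_nonneg_of_le (fun n => ?_) (fun n => ?_)
    ((summable_inv_sq.mul_left (x^2/(1-x^2))))
  · have hd := mden_pos hx n
    have hm : (0:ℝ) < ((n:ℝ)+1)^2 := by positivity
    have hu : 1 - x^2/((n:ℝ)+1)^2 ≤ 1 := by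
      have : 0 ≤ x^2/((n:ℝ)+1)^2 := by positivity
      linarith
    have hupos : 0 < 1 - x^2/((n:ℝ)+1)^2 := by
      rw [sub_pos, div_lt_one hm]; linarith [sq_den_ge hx n, hd]
    simp only [neg_nonneg]
    exact Real.log_nonpos hupos.le hu
  · have hd := mden_pos hx n
    have hm : (0:ℝ) < ((n:ℝ)+1)^2 := by positivity
    have hupos : 0 < 1 - x^2/((n:ℝ)+1)^2 := by
      rw [sub_pos, div_lt_one hm]; linarith
    rw [← Real.log_inv]
    have := Real.log_le_sub_one_of_pos (inv_pos.2 hupos)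
    refine this.trans ?_
    have key : (1 - x^2/((n:ℝ)+1)^2)⁻¹ - 1 = x^2/(((n:ℝ)+1)^2 - x^2) := by
      rw [inv_eq_one_div]
      field_simp
      ring
    rw [key]
    have hrr : x^2/(1-x^2) * (1/((n:ℝ)+1)^2) = x^2/((1-x^2)*((n:ℝ)+1)^2) := by
      rw [div_mul_div_comm, mul_one]
    rw [hrr]
    rcases eq_or_ne x 0 with h | h
    · simp [h]
    · have hpos : (0:ℝ) < (1-x^2)*((n:ℝ)+1)^2 := mul_pos (by nlinarith) (by positivity)
      rw [div_le_div_iff₀ hd hpos]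
      exact mul_le_mul_of_nonneg_left (sq_den_ge hx n) (by positivity)

lemma integral_gn {t : ℝ} (ht0 : 0 < t) (ht1 : t < 1) (n : ℕ) :
    ∫ s in (0:ℝ)..t, 2*s^2/(((n:ℝ)+1)^2 - s^2) = Fsum t n := by
  set m : ℝ := (n:ℝ)+1 with hm
  have hm1 : (1:ℝ) ≤ m := by
    have : (0:ℝ) ≤ (n:ℝ) := Nat.cast_nonneg n
    rw [hm]; linarith
  have key : ∀ s ∈ Set.uIcc (0:ℝ) t,
      HasDerivAt (fun y : ℝ => m * (log (m+y) - log (m-y)) - 2*y) (2*s^2/(m^2 - s^2)) s := by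
    intro s hs
    rw [Set.uIcc_of_le ht0.le] at hs
    have hs0 : 0 ≤ s := hs.1
    have hst : s ≤ t := hs.2
    have hp : 0 < m + s := by linarith
    have hq : 0 < m - s := by linarith
    have h1 : HasDerivAt (fun y : ℝ => log (m+y)) ((m+s)⁻¹) s := by
      have ha : HasDerivAt (fun y : ℝ => m + y) 1 s := (hasDerivAt_id s).const_add m
      exact ((Real.hasDerivAt_log hp.ne').comp s ha).congr_deriv (by simp)
    have h2 : HasDerivAt (fun y : ℝ => log (m-y)) (-(m-s)⁻¹) s := by
      have ha : HasDerivAt (fun y : ℝ => m - y) (-1) s := by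
        exact (hasDerivAt_id s).const_sub m
      have := (Real.hasDerivAt_log hq.ne').comp s ha
      exact this.congr_deriv (by simp)
    have h3 := ((h1.sub h2).const_mul m).sub ((hasDerivAt_id s).const_mul 2)
    refine h3.congr_deriv ?_
    have hd : 0 < m^2 - s^2 := by nlinarith
    field_simp
    ring
  have hcont : IntervalIntegrable (fun s : ℝ => 2*s^2/(m^2-s^2)) MeasureTheory.volume 0 t := by
    apply ContinuousOn.intervalIntegrable
    apply ContinuousOn.div
    · fun_prop
    · fun_prop
    · intro s hs
      rw [Set.uIcc_of_le ht0.le] at hs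
      have : 0 < m^2 - s^2 := by nlinarith [hs.1, hs.2]
      exact this.ne'
  rw [intervalIntegral.integral_eq_sub_of_hasDerivAt key hcont]
  simp [Fsum, hm]


private noncomputable def LL (n : ℕ) (y : ℝ) : ℝ := Real.log (1 - y^2/((n:ℝ)+1)^2)
private noncomputable def DD (n : ℕ) (y : ℝ) : ℝ := -(2*y)/(((n:ℝ)+1)^2 - y^2)

private lemma hasDerivAt_LL {y : ℝ} (hy : |y| < 1) (n : ℕ) :
    HasDerivAt (LL n) (DD n y) y := by
  have hd := mden_pos hy n
  have hm : (0:ℝ) < ((n:ℝ)+1)^2 := by positivity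
  have hu : HasDerivAt (fun z : ℝ => 1 - z^2/((n:ℝ)+1)^2) (-(2*y^1/((n:ℝ)+1)^2)) y :=
    ((hasDerivAt_pow 2 y).div_const (((n:ℝ)+1)^2)).const_sub 1
  have hne : 1 - y^2/((n:ℝ)+1)^2 ≠ 0 := by
    have : 1 - y^2/((n:ℝ)+1)^2 = (((n:ℝ)+1)^2 - y^2)/((n:ℝ)+1)^2 := by field_simp
    rw [this]
    positivity
  have := (Real.hasDerivAt_log hne).comp y hu
  refine this.congr_deriv ?_
  unfold DD
  field_simp

private lemma euler_log {y : ℝ} (hy0 : 0 < y) (hy1 : y < 1) :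
    Real.log π + Real.log y + ∑' n, LL n y = Real.log (Real.sin (π*y)) := by
  have hy : |y| < 1 := abs_lt.2 ⟨by linarith, hy1⟩
  have hs : Summable (fun n => LL n y) := summable_L hy
  have hsinpos : 0 < Real.sin (π*y) :=
    Real.sin_pos_of_pos_of_lt_pi (mul_pos Real.pi_pos hy0)
      (mul_lt_of_lt_one_right Real.pi_pos hy1)
  have hfact : ∀ j : ℕ, (0:ℝ) < 1 - y^2/((j:ℝ)+1)^2 := by
    intro j
    have : 1 - y^2/((j:ℝ)+1)^2 = (((j:ℝ)+1)^2 - y^2)/((j:ℝ)+1)^2 := by field_simp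
    rw [this]
    have := mden_pos hy j
    positivity
  have hEuler := Real.tendsto_euler_sin_prod y
  have htends1 : Tendsto (fun N => Real.log π + Real.log y + ∑ j ∈ Finset.range N, LL j y)
      atTop (𝓝 (Real.log (Real.sin (π*y)))) := by
    have hcomp := ((Real.continuousAt_log hsinpos.ne').tendsto).comp hEuler
    refine hcomp.congr (fun N => ?_)
    show Real.log (π * y * ∏ j ∈ Finset.range N, (1 - y^2/((j:ℝ)+1)^2)) = _
    rw [Real.log_mul (by positivity) (Finset.prod_ne_zero_iff.2 fun j _ => (hfact j).ne'),
      Real.log_mul Real.pi_pos.ne' hy0.ne', Real.log_prod (fun j _ => (hfact j).ne')]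
    rfl
  have htends2 : Tendsto (fun N => Real.log π + Real.log y + ∑ j ∈ Finset.range N, LL j y)
      atTop (𝓝 (Real.log π + Real.log y + ∑' n, LL n y)) :=
    tendsto_const_nhds.add hs.hasSum.tendsto_sum_nat
  exact tendsto_nhds_unique htends2 htends1

lemma cot_expansion {x : ℝ} (hx0 : 0 < x) (hx1 : x < 1) :
    π * x * Real.cot (π * x) = 1 - ∑' n : ℕ, 2*x^2/(((n:ℝ)+1)^2 - x^2) := by
  set g : ℝ → ℝ := fun y => Real.log (Real.sin (π*y)) - Real.log π with hg
  set g' : ℝ → ℝ := fun y => y⁻¹ + ∑' n, DD n y with hg'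
  have hmem : x ∈ Set.Ioo (0:ℝ) 1 := ⟨hx0, hx1⟩
  have H1 : HasDerivAt g (g' x) x := by
    apply hasDerivAt_of_tendstoLocallyUniformlyOn isOpen_Ioo
      (l := (atTop : Filter (Finset ℕ)))
      (f := fun (F : Finset ℕ) y => Real.log y + ∑ n ∈ F, LL n y)
      (f' := fun (F : Finset ℕ) y => y⁻¹ + ∑ n ∈ F, DD n y)
      ?_ ?_ ?_ hmem
    · -- TendstoLocallyUniformlyOn
      rw [tendstoLocallyUniformlyOn_iff_forall_isCompact isOpen_Ioo]
      intro K hK hKc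
      rcases K.eq_empty_or_nonempty with rfl | hKne
      · exact tendstoUniformlyOn_empty
      have hbK := hKc.sSup_mem hKne
      set b := sSup K with hb
      obtain ⟨hb0, hb1⟩ := hK hbK
      have hub : ∀ y ∈ K, y ≤ b := fun y hy => le_csSup hKc.bddAbove hy
      have habsb : |b| < 1 := abs_lt.2 ⟨by linarith, hb1⟩
      have hbase : TendstoUniformlyOn (fun (F : Finset ℕ) y => ∑ n ∈ F, DD n y)
          (fun y => ∑' n, DD n y) atTop K := by
        apply tendstoUniformlyOn_tsum
          (u := fun n : ℕ => 2*b/(1-b^2) * (1/((n:ℝ)+1)^2))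
          ((summable_inv_sq).mul_left _)
        intro n y hy
        obtain ⟨hy0, hy1⟩ := hK hy
        have hyb := hub y hy
        have habsy : |y| < 1 := abs_lt.2 ⟨by linarith, hy1⟩
        have hd := mden_pos habsy n
        have hrw : (2*b/(1-b^2)) * (1/((n:ℝ)+1)^2) = 2*b/((1-b^2) * ((n:ℝ)+1)^2) := by
          rw [div_mul_div_comm, mul_one]
        have hnorm : ‖DD n y‖ = 2*y/(((n:ℝ)+1)^2 - y^2) := by
          rw [DD, norm_div, Real.norm_eq_abs, Real.norm_eq_abs, abs_neg,
            abs_of_nonneg (by linarith : (0:ℝ) ≤ 2*y), abs_of_pos hd]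
        rw [hnorm, hrw]
        have hden : (1-b^2) * ((n:ℝ)+1)^2 ≤ ((n:ℝ)+1)^2 - y^2 := by
          have h1 := sq_den_ge habsb n
          have : y^2 ≤ b^2 := by nlinarith
          linarith
        have hdenpos : (0:ℝ) < (1-b^2) * ((n:ℝ)+1)^2 :=
          mul_pos (by nlinarith) (by positivity)
        exact div_le_div₀ (by linarith) (by linarith) hdenpos hden
      have hconst : TendstoUniformlyOn (fun (_ : Finset ℕ) (y : ℝ) => y⁻¹)
          (fun y => y⁻¹) atTop K := by
        rw [Metric.tendstoUniformlyOn_iff]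
        intro ε hε
        filter_upwards with F y _
        simpa using hε
      exact hconst.add hbase
    · -- eventually hasDerivAt
      filter_upwards with F y hy
      obtain ⟨hy0, hy1⟩ := hy
      have habsy : |y| < 1 := abs_lt.2 ⟨by linarith, hy1⟩
      exact (Real.hasDerivAt_log hy0.ne').add
        (HasDerivAt.fun_sum fun n _ => hasDerivAt_LL habsy n)
    · -- pointwise convergence
      intro y hy
      obtain ⟨hy0, hy1⟩ := hy
      have habsy : |y| < 1 := abs_lt.2 ⟨by linarith, hy1⟩
      have hs : Summable (fun n => LL n y) := summable_L habsy
      have hkey := euler_log hy0 hy1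
      have hHasSum : HasSum (fun n => LL n y) (g y - Real.log y) := by
        have := hs.hasSum
        convert this using 1
        rw [hg]
        simp only
        linarith
      have ht : Tendsto (fun F : Finset ℕ => Real.log y + ∑ n ∈ F, LL n y) atTop
          (𝓝 (Real.log y + (g y - Real.log y))) :=
        Filter.Tendsto.const_add (Real.log y) hHasSum
      simpa using ht
  -- second derivative computation
  have hsinpos : 0 < Real.sin (π*x) :=
    Real.sin_pos_of_pos_of_lt_pi (mul_pos Real.pi_pos hx0)
      (mul_lt_of_lt_one_right Real.pi_pos hx1)
  have H2 : HasDerivAt g ((Real.sin (π*x))⁻¹ * (Real.cos (π*x) * π)) x := by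
    have ha : HasDerivAt (fun y : ℝ => π * y) π x := by
      simpa using (hasDerivAt_id x).const_mul π
    have hsin : HasDerivAt (fun y : ℝ => Real.sin (π*y)) (Real.cos (π*x) * π) x :=
      (Real.hasDerivAt_sin (π*x)).comp x ha
    have hlog := (Real.hasDerivAt_log hsinpos.ne').comp x hsin
    exact hlog.sub_const (Real.log π)
  have huniq : g' x = (Real.sin (π*x))⁻¹ * (Real.cos (π*x) * π) := H1.unique H2
  have hgx : x⁻¹ + ∑' n, DD n x = (Real.sin (π*x))⁻¹ * (Real.cos (π*x) * π) := huniq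
  have step : π * x * Real.cot (π*x) = x * ((Real.sin (π*x))⁻¹ * (Real.cos (π*x) * π)) := by
    rw [Real.cot_eq_cos_div_sin, div_eq_mul_inv]
    ring
  rw [step, ← hgx, mul_add, mul_inv_cancel₀ hx0.ne', ← tsum_mul_left]
  congr 1
  rw [← tsum_neg]
  apply tsum_congr
  intro n
  rw [DD, div_eq_mul_inv, div_eq_mul_inv]
  ring


lemma S2_eq_exp {t : ℝ} (ht0 : 0 < t) (ht1 : t < 1) :
    S2 t = Real.exp (t - ∑' n, Fsum t n) := by
  have hS := (summable_Fsum ht0 ht1).neg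
  have hHasSum := hS.hasSum
  have ha_eq : ∀ n : ℕ,
      ((1 - t / ((n:ℝ) + 1)) / (1 + t / ((n:ℝ) + 1))) ^ (n + 1) * Real.exp (2 * t)
        = Real.exp (-(Fsum t n)) := by
    intro n
    set m : ℝ := (n:ℝ)+1 with hm
    have hm1 : (1:ℝ) ≤ m := by
      have : (0:ℝ) ≤ (n:ℝ) := Nat.cast_nonneg n
      rw [hm]; linarith
    have hm0 : (0:ℝ) < m := by linarith
    have hmt : 0 < m - t := by linarith
    have hpt : 0 < m + t := by linarith
    have hratio : (1 - t/m)/(1 + t/m) = (m - t)/(m + t) := by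
      rw [div_eq_div_iff (by positivity) hpt.ne']
      field_simp
    have hrpos : 0 < (m - t)/(m + t) := div_pos hmt hpt
    have hpow : ((m - t)/(m + t)) ^ (n+1)
        = Real.exp (((n:ℝ)+1) * Real.log ((m - t)/(m + t))) := by
      rw [← Real.exp_log hrpos, ← Real.exp_nat_mul, Real.log_exp]
      push_cast
      ring_nf
    rw [hratio, hpow, ← Real.exp_add, Real.log_div hmt.ne' hpt.ne']
    congr 1
    rw [Fsum, ← hm]
    ring
  have hProd : HasProd (fun n : ℕ => Real.exp (-(Fsum t n)))
      (Real.exp (∑' n, -(Fsum t n))) := by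
    have h1 : Tendsto (fun F : Finset ℕ => Real.exp (∑ n ∈ F, -(Fsum t n))) atTop
        (𝓝 (Real.exp (∑' n, -(Fsum t n)))) :=
      (Real.continuous_exp.tendsto _).comp hHasSum
    have h2 : ∀ F : Finset ℕ, Real.exp (∑ n ∈ F, -(Fsum t n))
        = ∏ n ∈ F, Real.exp (-(Fsum t n)) := fun F => Real.exp_sum F _
    exact h1.congr (fun F => h2 F)
  rw [S2]
  have : ∏' n : ℕ, (((1 - t / ((n:ℝ) + 1)) / (1 + t / ((n:ℝ) + 1))) ^ (n + 1) * Real.exp (2 * t))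
      = Real.exp (∑' n, -(Fsum t n)) := by
    rw [tprod_congr ha_eq]
    exact hProd.tprod_eq
  rw [this, ← Real.exp_add, tsum_neg]
  ring_nf

lemma integral_eq {t : ℝ} (ht0 : 0 < t) (ht1 : t < 1) :
    ∫ s in (0:ℝ)..t, π * s * Real.cot (π * s) = t - ∑' n, Fsum t n := by
  have habs_t : |t| < 1 := abs_lt.2 ⟨by linarith, ht1⟩
  set T : ℝ → ℝ := fun s => ∑' n : ℕ, 2*s^2/(((n:ℝ)+1)^2 - s^2) with hT
  set Ct : ℝ := ∑' n : ℕ, 2*t^2/(((n:ℝ)+1)^2 - t^2) with hCt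
  have hCt0 : 0 ≤ Ct := tsum_nonneg (fun n => div_nonneg (by positivity) (mden_pos habs_t n).le)
  have hTbd : ∀ s ∈ Set.Ioc (0:ℝ) t, 0 ≤ T s ∧ T s ≤ Ct := by
    intro s hs
    have habs_s : |s| < 1 := abs_lt.2 ⟨by linarith [hs.1], by linarith [hs.2]⟩
    constructor
    · exact tsum_nonneg (fun n => div_nonneg (by positivity) (mden_pos habs_s n).le)
    · apply Summable.tsum_le_tsum _ (summable_gn habs_s) (summable_gn habs_t)
      intro n
      have h1 := mden_pos habs_s n
      have h2 := mden_pos habs_t n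
      apply div_le_div₀ (by positivity) _ h2 _
      · nlinarith [hs.1, hs.2]
      · nlinarith [hs.1, hs.2]
  have hIoc : ∀ s ∈ Set.Ioc (0:ℝ) t, π * s * Real.cot (π * s) = 1 - T s := by
    intro s hs
    exact cot_expansion hs.1 (lt_of_le_of_lt hs.2 ht1)
  have hmeas : Measurable (fun s : ℝ => π * s * Real.cot (π * s)) := by
    have : (fun s : ℝ => π * s * Real.cot (π * s))
        = fun s : ℝ => π * s * (Real.cos (π*s) / Real.sin (π*s)) := by
      funext s; rw [Real.cot_eq_cos_div_sin]
    rw [this]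
    fun_prop
  have hvol : MeasureTheory.volume (Set.Ioc (0:ℝ) t) < ⊤ := measure_Ioc_lt_top
  have hIntOn : MeasureTheory.IntegrableOn (fun s : ℝ => π * s * Real.cot (π * s))
      (Set.Ioc 0 t) MeasureTheory.volume := by
    apply MeasureTheory.Integrable.mono' (g := fun _ : ℝ => 1 + Ct)
      (MeasureTheory.integrableOn_const hvol.ne)
      hmeas.aestronglyMeasurable.restrict
    rw [MeasureTheory.ae_restrict_iff' measurableSet_Ioc]
    filter_upwards with s hs
    obtain ⟨h1, h2⟩ := hTbd s hs
    rw [hIoc s hs, Real.norm_eq_abs, abs_le]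
    constructor <;> linarith
  -- term integrability
  have hgn_int : ∀ n : ℕ, MeasureTheory.IntegrableOn
      (fun s : ℝ => 2*s^2/(((n:ℝ)+1)^2 - s^2)) (Set.Ioc 0 t) MeasureTheory.volume := by
    intro n
    apply MeasureTheory.IntegrableOn.mono_set _ Set.Ioc_subset_Icc_self
    apply ContinuousOn.integrableOn_Icc
    apply ContinuousOn.div
    · fun_prop
    · fun_prop
    · intro s hs
      have habs_s : |s| < 1 := by
        rw [abs_lt]; constructor
        · linarith [hs.1]
        · linarith [hs.2]
      exact (mden_pos habs_s n).ne'
  have hnorm_eq : ∀ n : ℕ, (∫ s in Set.Ioc (0:ℝ) t, ‖2*s^2/(((n:ℝ)+1)^2 - s^2)‖) = Fsum t n := by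
    intro n
    rw [MeasureTheory.setIntegral_congr_fun measurableSet_Ioc
      (g := fun s => 2*s^2/(((n:ℝ)+1)^2 - s^2)) ?_]
    · rw [← intervalIntegral.integral_of_le ht0.le]
      exact integral_gn ht0 ht1 n
    · intro s hs
      have habs_s : |s| < 1 := abs_lt.2 ⟨by linarith [hs.1], by linarith [hs.2]⟩
      exact Real.norm_of_nonneg (div_nonneg (by positivity) (mden_pos habs_s n).le)
  have hsummable_int : Summable (fun n : ℕ => ∫ s in Set.Ioc (0:ℝ) t,
      ‖2*s^2/(((n:ℝ)+1)^2 - s^2)‖) := by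
    apply Summable.congr (summable_Fsum ht0 ht1)
    intro n
    exact (hnorm_eq n).symm
  have hswap := MeasureTheory.integral_tsum_of_summable_integral_norm hgn_int hsummable_int
  have hTint_eq : (∫ s in Set.Ioc (0:ℝ) t, T s) = ∑' n, Fsum t n := by
    rw [← hswap]
    apply tsum_congr
    intro n
    rw [← hnorm_eq n]
    apply MeasureTheory.setIntegral_congr_fun measurableSet_Ioc
    intro s hs
    have habs_s : |s| < 1 := abs_lt.2 ⟨by linarith [hs.1], by linarith [hs.2]⟩
    exact (Real.norm_of_nonneg (div_nonneg (by positivity) (mden_pos habs_s n).le)).symm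
  -- integrability of 1 - T
  have hInt1T : MeasureTheory.IntegrableOn (fun s : ℝ => 1 - T s) (Set.Ioc 0 t)
      MeasureTheory.volume := by
    exact hIntOn.congr ((MeasureTheory.ae_restrict_iff' measurableSet_Ioc).2
      (Filter.Eventually.of_forall hIoc))
  have hIntT : MeasureTheory.IntegrableOn T (Set.Ioc 0 t) MeasureTheory.volume := by
    have h := (MeasureTheory.integrableOn_const (C := (1:ℝ)) hvol.ne).sub hInt1T
    apply h.congr
    filter_upwards with s
    simp [Pi.sub_apply]
  calc ∫ s in (0:ℝ)..t, π * s * Real.cot (π * s)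
      = ∫ s in Set.Ioc (0:ℝ) t, π * s * Real.cot (π * s) :=
        intervalIntegral.integral_of_le ht0.le
    _ = ∫ s in Set.Ioc (0:ℝ) t, (1 - T s) :=
        MeasureTheory.setIntegral_congr_fun measurableSet_Ioc hIoc
    _ = (∫ _ in Set.Ioc (0:ℝ) t, (1:ℝ)) - ∫ s in Set.Ioc (0:ℝ) t, T s :=
        MeasureTheory.integral_sub (MeasureTheory.integrableOn_const hvol.ne) hIntT
    _ = t - ∑' n, Fsum t n := by
        rw [hTint_eq, MeasureTheory.setIntegral_const, smul_eq_mul, mul_one,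
          Real.volume_real_Ioc_of_le ht0.le, sub_zero]


theorem S2_eq_exp_integral (t : ℝ) (ht0 : 0 < t) (ht1 : t < 1) :
    S2 t = Real.exp (∫ s in (0 : ℝ)..t, π * s * Real.cot (π * s)) := by
  rw [integral_eq ht0 ht1]
  exact S2_eq_exp ht0 ht1
end
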